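/- arXiv:1605.09508 — 13 statements merged into one kernel-verified Lean document; each statement's English description precedes it below -/
import Mathlib

section
/- For every real number X > 0, the number of positive integers n ≤ X with h(n) = 0 is strictly greater than X/2 − (3/2 + √2)·√X − 1 − (3√2)/2. -/
/-- The set `A_n` of pairs `(x, y)` of positive integers with `n = x(x+y)` and `1 ≤ y ≤ x-1`. -/
def lerchA (n : ℕ) : Finset (ℕ × ℕ) :=
  (Finset.range (n + 1) ×ˢ Finset.range (n + 1)).filter
    (fun p => 0 < p.1 ∧ 1 ≤ p.2 ∧ p.2 ≤ p.1 - 1 ∧ n = p.1 * (p.1 + p.2))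

/-- The set `B_n` of positive integers `x` with `n = x²`. -/
def lerchB (n : ℕ) : Finset ℕ :=
  (Finset.range (n + 1)).filter (fun x => 0 < x ∧ n = x ^ 2)

/-- The set `C_n` of positive integers `x` with `n = 2x²`. -/
def lerchC (n : ℕ) : Finset ℕ :=
  (Finset.range (n + 1)).filter (fun x => 0 < x ∧ n = 2 * x ^ 2)

/-- `h(n) = 2·|A_n| + |B_n| + |C_n|`, the `n`-th coefficient of the half Lerch sum. -/
def lerchh (n : ℕ) : ℕ := 2 * (lerchA n).card + (lerchB n).card + (lerchC n).card

/-- If `h(n) ≠ 0` then `n = x * m` with `1 ≤ x ≤ m ≤ 2x`. -/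
lemma lerchh_ne_zero_witness {n : ℕ} (h : lerchh n ≠ 0) :
    ∃ x m : ℕ, 1 ≤ x ∧ x ≤ m ∧ m ≤ 2 * x ∧ n = x * m := by
  have hne : (lerchA n).Nonempty ∨ (lerchB n).Nonempty ∨ (lerchC n).Nonempty := by
    by_contra hcon
    push_neg at hcon
    obtain ⟨hA, hB, hC⟩ := hcon
    apply h
    unfold lerchh
    rw [hA, hB, hC]
    simp
  rcases hne with hA | hB | hC
  · obtain ⟨⟨x, y⟩, hp⟩ := hA
    simp only [lerchA, Finset.mem_filter] at hp
    obtain ⟨-, hx, hy1, hy2, hn⟩ := hp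
    exact ⟨x, x + y, hx, Nat.le_add_right _ _, by omega, hn⟩
  · obtain ⟨x, hp⟩ := hB
    simp only [lerchB, Finset.mem_filter] at hp
    obtain ⟨-, hx, hn⟩ := hp
    exact ⟨x, x, hx, le_refl _, by omega, by rw [hn]; ring⟩
  · obtain ⟨x, hp⟩ := hC
    simp only [lerchC, Finset.mem_filter] at hp
    obtain ⟨-, hx, hn⟩ := hp
    exact ⟨x, 2 * x, hx, by omega, le_refl _, by rw [hn]; ring⟩

lemma sum_Icc_one_add_one_mul_two (K : ℕ) :
    (∑ x ∈ Finset.Icc 1 K, (x + 1)) * 2 = K * (K + 3) := by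
  induction K with
  | zero => simp
  | succ k ih =>
    rw [Finset.sum_Icc_succ_top (by omega), add_mul, ih]
    ring

/-- The key real arithmetic inequality. -/
lemma lerch_key_arith (s t k : ℝ) (hs0 : 0 < s) (ht2 : t ^ 2 = 2) (ht1 : 1 ≤ t) (hk0 : 0 ≤ k)
    (hkt : k * t ≤ s) (hk1 : s < (k + 1) * t) :
    (s ^ 2 - 1) - k * (k + 3) / 2 - (s - k) * (s * t - k)
      > s ^ 2 / 2 - (3 / 2 + t) * s - 1 - 3 * t / 2 := by
  have ht0 : 0 < t := lt_of_lt_of_le zero_lt_one ht1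
  have ht32 : t ≤ 1.415 := by nlinarith
  have ht14 : 1.414 ≤ t := by nlinarith
  have ha : 2 * k ≤ s * t := by nlinarith [mul_le_mul_of_nonneg_right hkt ht0.le]
  have hb : s * t < 2 * k + 2 := by nlinarith [mul_lt_mul_of_pos_right hk1 ht0]
  nlinarith [mul_nonneg (by linarith : (0:ℝ) ≤ s*t - 2*k) (by linarith : (0:ℝ) ≤ 2*k + 2 - s*t),
    mul_nonneg hs0.le (by linarith : (0:ℝ) ≤ s*t - 2*k),
    mul_nonneg hs0.le (by linarith : (0:ℝ) ≤ 2*k + 2 - s*t),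
    mul_nonneg (sq_nonneg s) (by linarith : (0:ℝ) ≤ 1.415 - t),
    mul_nonneg hk0 (by linarith : (0:ℝ) ≤ t)]

set_option maxHeartbeats 1000000 in
/-- For every real `X > 0`, `#{1 ≤ n ≤ X : h(n) = 0} > X/2 - (3/2 + √2)√X - 1 - 3√2/2`. -/
theorem card_h_eq_zero_gt (X : ℝ) (hX : 0 < X) :
    (((Finset.Icc 1 ⌊X⌋₊).filter (fun n => lerchh n = 0)).card : ℝ)
      > X / 2 - (3 / 2 + Real.sqrt 2) * Real.sqrt X - 1 - 3 * Real.sqrt 2 / 2 := by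
  set N := ⌊X⌋₊ with hN
  set K := Nat.sqrt (N / 2) with hK
  set L := Nat.sqrt N with hL
  set Q := N / (K + 1) with hQ
  set P : Finset (ℕ × ℕ) := ((Finset.Icc 1 N) ×ˢ (Finset.Icc 1 N)).filter
    (fun p => p.1 ≤ p.2 ∧ p.2 ≤ 2 * p.1 ∧ p.1 * p.2 ≤ N) with hP
  have hSsub : (Finset.Icc 1 N).filter (fun n => ¬ lerchh n = 0) ⊆
      P.image (fun p => p.1 * p.2) := by
    intro n hn
    simp only [Finset.mem_filter, Finset.mem_Icc] at hn
    obtain ⟨⟨hn1, hnN⟩, hne⟩ := hn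
    obtain ⟨x, m, hx1, hxm, hm2x, hnxm⟩ := lerchh_ne_zero_witness hne
    refine Finset.mem_image.2 ⟨(x, m), ?_, hnxm.symm⟩
    simp only [hP, Finset.mem_filter, Finset.mem_product, Finset.mem_Icc]
    have hxn : x ≤ N := le_trans (le_trans (Nat.le_mul_of_pos_right x (by omega)) hnxm.ge) hnN
    have hmn : m ≤ N := le_trans (le_trans (Nat.le_mul_of_pos_left m (by omega)) hnxm.ge) hnN
    exact ⟨⟨⟨hx1, hxn⟩, ⟨le_trans hx1 hxm, hmn⟩⟩, hxm, hm2x, by omega⟩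
  have hPsplit : P.card = (P.filter (fun p => p.1 ≤ K)).card
      + (P.filter (fun p => ¬ p.1 ≤ K)).card :=
    (Finset.card_filter_add_card_filter_not _).symm
  have hP1 : (P.filter (fun p => p.1 ≤ K)).card ≤ ∑ x ∈ Finset.Icc 1 K, (x + 1) := by
    have hsub : P.filter (fun p => p.1 ≤ K) ⊆
        (Finset.Icc 1 K).biUnion (fun x => {x} ×ˢ Finset.Icc x (2 * x)) := by
      intro p hp
      simp only [hP, Finset.mem_filter, Finset.mem_product, Finset.mem_Icc] at hp
      obtain ⟨⟨⟨⟨h1, _⟩, _⟩, h3, h4, _⟩, h6⟩ := hp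
      simp only [Finset.mem_biUnion, Finset.mem_Icc, Finset.mem_product,
        Finset.mem_singleton]
      exact ⟨p.1, ⟨h1, h6⟩, rfl, h3, h4⟩
    refine le_trans (Finset.card_le_card hsub) (le_trans Finset.card_biUnion_le ?_)
    refine Finset.sum_le_sum (fun x hx => ?_)
    rw [Finset.card_product, Finset.card_singleton, one_mul, Nat.card_Icc]
    omega
  have hP2 : (P.filter (fun p => ¬ p.1 ≤ K)).card ≤
      (Finset.Icc (K + 1) L).card * (Finset.Icc (K + 1) Q).card := by
    rw [← Finset.card_product]
    refine Finset.card_le_card (fun p hp => ?_)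
    simp only [hP, Finset.mem_filter, Finset.mem_product, Finset.mem_Icc] at hp ⊢
    obtain ⟨⟨⟨⟨h1, _⟩, _⟩, h3, h4, h5⟩, h6⟩ := hp
    refine ⟨⟨by omega, ?_⟩, by omega, ?_⟩
    · rw [hL, Nat.le_sqrt]
      exact le_trans (Nat.mul_le_mul_left p.1 h3) h5
    · rw [hQ, Nat.le_div_iff_mul_le (by omega)]
      calc p.2 * (K + 1) ≤ p.2 * p.1 := Nat.mul_le_mul_left p.2 (by omega)
        _ = p.1 * p.2 := Nat.mul_comm _ _
        _ ≤ N := h5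
  have hcount : ((Finset.Icc 1 N).filter (fun n => lerchh n = 0)).card
      + ((Finset.Icc 1 N).filter (fun n => ¬ lerchh n = 0)).card = N := by
    rw [Finset.card_filter_add_card_filter_not, Nat.card_Icc]
    omega
  have hbad : ((Finset.Icc 1 N).filter (fun n => ¬ lerchh n = 0)).card ≤
      (∑ x ∈ Finset.Icc 1 K, (x + 1))
      + (Finset.Icc (K + 1) L).card * (Finset.Icc (K + 1) Q).card := by
    calc ((Finset.Icc 1 N).filter (fun n => ¬ lerchh n = 0)).card
        ≤ (P.image (fun p => p.1 * p.2)).card := Finset.card_le_card hSsub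
      _ ≤ P.card := Finset.card_image_le
      _ = _ := hPsplit
      _ ≤ _ := Nat.add_le_add hP1 hP2
  -- pass to the reals
  set s := Real.sqrt X with hs
  set t := Real.sqrt 2 with ht
  have hs0 : 0 < s := Real.sqrt_pos.2 hX
  have hsX : s ^ 2 = X := Real.sq_sqrt hX.le
  have ht2 : t ^ 2 = 2 := Real.sq_sqrt (by norm_num)
  have ht1 : 1 ≤ t := by nlinarith [Real.sqrt_nonneg 2]
  have hNX : (N : ℝ) ≤ X := Nat.floor_le hX.le
  have hXN : X < (N : ℝ) + 1 := Nat.lt_floor_add_one X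
  have hk2 : 2 * (K : ℝ) ^ 2 ≤ X := by
    have h1 : K ^ 2 ≤ N / 2 := Nat.sqrt_le' _
    have h2 : 2 * K ^ 2 ≤ N := by omega
    calc 2 * (K : ℝ) ^ 2 = ((2 * K ^ 2 : ℕ) : ℝ) := by push_cast; ring
      _ ≤ (N : ℝ) := Nat.cast_le.2 h2
      _ ≤ X := hNX
  have hkt : (K : ℝ) * t ≤ s := by
    have h := Real.sqrt_le_sqrt (by nlinarith : 2 * (K:ℝ)^2 ≤ X)
    calc (K : ℝ) * t = Real.sqrt (2 * (K:ℝ)^2) := by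
          rw [Real.sqrt_mul' _ (by positivity), Real.sqrt_sq (Nat.cast_nonneg K)]
          ring
      _ ≤ s := h
  have hks : (K : ℝ) ≤ s := le_trans (by nlinarith [Nat.cast_nonneg (α := ℝ) K]) hkt
  have hk1 : s < ((K : ℝ) + 1) * t := by
    have h1 : N / 2 < (K + 1) ^ 2 := Nat.lt_succ_sqrt' _
    have h2 : N + 1 ≤ 2 * (K + 1) ^ 2 := by omega
    have h3 : X < 2 * ((K : ℝ) + 1) ^ 2 := by
      calc X < (N : ℝ) + 1 := hXN
        _ = ((N + 1 : ℕ) : ℝ) := by push_cast; ring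
        _ ≤ ((2 * (K + 1) ^ 2 : ℕ) : ℝ) := Nat.cast_le.2 h2
        _ = 2 * ((K : ℝ) + 1) ^ 2 := by push_cast; ring
    by_contra hcon
    push_neg at hcon
    have h4 : (((K : ℝ) + 1) * t) ^ 2 ≤ s ^ 2 := by
      refine pow_le_pow_left₀ (by positivity) hcon 2
    nlinarith
  have hls : (L : ℝ) ≤ s := by
    have h1 : L ^ 2 ≤ N := Nat.sqrt_le' _
    have h2 : (L : ℝ) ^ 2 ≤ X := by
      calc (L : ℝ) ^ 2 = ((L ^ 2 : ℕ) : ℝ) := by push_cast; ring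
        _ ≤ (N : ℝ) := Nat.cast_le.2 h1
        _ ≤ X := hNX
    nlinarith [Nat.cast_nonneg (α := ℝ) L]
  have hqs : (Q : ℝ) < s * t := by
    have h1 : Q * (K + 1) ≤ N := Nat.div_mul_le_self N (K + 1)
    have h2 : (Q : ℝ) * ((K : ℝ) + 1) ≤ X := by
      calc (Q : ℝ) * ((K : ℝ) + 1) = ((Q * (K + 1) : ℕ) : ℝ) := by push_cast; ring
        _ ≤ (N : ℝ) := Nat.cast_le.2 h1
        _ ≤ X := hNX
    have hk1' : (0 : ℝ) < (K : ℝ) + 1 := by positivity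
    have h3 : (Q : ℝ) * ((K : ℝ) + 1) < s * t * ((K : ℝ) + 1) := by
      calc (Q : ℝ) * ((K : ℝ) + 1) ≤ X := h2
        _ = s * s := by rw [← hsX]; ring
        _ < s * (((K : ℝ) + 1) * t) := mul_lt_mul_of_pos_left hk1 hs0
        _ = s * t * ((K : ℝ) + 1) := by ring
    exact lt_of_mul_lt_mul_right h3 hk1'.le
  have hc1 : ((Finset.Icc (K + 1) L).card : ℝ) ≤ s - K := by
    rw [Nat.card_Icc]
    by_cases h : K + 1 ≤ L
    · rw [Nat.cast_sub (by omega)]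
      push_cast
      linarith
    · have h0 : L + 1 - (K + 1) = 0 := by omega
      rw [h0]
      simpa using sub_nonneg.2 hks
  have hc2 : ((Finset.Icc (K + 1) Q).card : ℝ) ≤ s * t - K := by
    rw [Nat.card_Icc]
    by_cases h : K + 1 ≤ Q
    · rw [Nat.cast_sub (by omega)]
      push_cast
      linarith
    · have h0 : Q + 1 - (K + 1) = 0 := by omega
      rw [h0]
      push_cast
      linarith [mul_nonneg (Nat.cast_nonneg (α := ℝ) K) (sub_nonneg.2 ht1),
        mul_nonneg hs0.le (sub_nonneg.2 ht1), hkt]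
  have hp1 : ((∑ x ∈ Finset.Icc 1 K, (x + 1) : ℕ) : ℝ) * 2 = (K : ℝ) * ((K : ℝ) + 3) := by
    calc ((∑ x ∈ Finset.Icc 1 K, (x + 1) : ℕ) : ℝ) * 2
        = (((∑ x ∈ Finset.Icc 1 K, (x + 1)) * 2 : ℕ) : ℝ) := by push_cast; ring
      _ = ((K * (K + 3) : ℕ) : ℝ) := by rw [sum_Icc_one_add_one_mul_two]
      _ = (K : ℝ) * ((K : ℝ) + 3) := by push_cast; ring
  have hZ : (((Finset.Icc 1 N).filter (fun n => lerchh n = 0)).card : ℝ)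
      ≥ (N : ℝ) - ((∑ x ∈ Finset.Icc 1 K, (x + 1) : ℕ) : ℝ)
        - ((Finset.Icc (K + 1) L).card : ℝ) * ((Finset.Icc (K + 1) Q).card : ℝ) := by
    have h1 : (((Finset.Icc 1 N).filter (fun n => lerchh n = 0)).card : ℝ)
        + (((Finset.Icc 1 N).filter (fun n => ¬ lerchh n = 0)).card : ℝ) = N := by
      exact_mod_cast congrArg (Nat.cast (R := ℝ)) hcount
    have h2 : (((Finset.Icc 1 N).filter (fun n => ¬ lerchh n = 0)).card : ℝ)
        ≤ ((∑ x ∈ Finset.Icc 1 K, (x + 1) : ℕ) : ℝ)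
          + ((Finset.Icc (K + 1) L).card : ℝ) * ((Finset.Icc (K + 1) Q).card : ℝ) := by
      exact_mod_cast Nat.cast_le.2 hbad
    linarith
  have hprod : ((Finset.Icc (K + 1) L).card : ℝ) * ((Finset.Icc (K + 1) Q).card : ℝ)
      ≤ (s - K) * (s * t - K) := by
    have h1 : (0 : ℝ) ≤ ((Finset.Icc (K + 1) L).card : ℝ) := Nat.cast_nonneg _
    have h2 : (0 : ℝ) ≤ ((Finset.Icc (K + 1) Q).card : ℝ) := Nat.cast_nonneg _
    have h3 : (0 : ℝ) ≤ s * t - K := le_trans h2 hc2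
    exact mul_le_mul hc1 hc2 h2 (by linarith [le_trans h2 hc2, hks] : (0:ℝ) ≤ s - K)
  have hkey := lerch_key_arith s t K hs0 ht2 ht1 (Nat.cast_nonneg K) hkt hk1
  calc (((Finset.Icc 1 N).filter (fun n => lerchh n = 0)).card : ℝ)
      ≥ (N : ℝ) - ((∑ x ∈ Finset.Icc 1 K, (x + 1) : ℕ) : ℝ)
        - ((Finset.Icc (K + 1) L).card : ℝ) * ((Finset.Icc (K + 1) Q).card : ℝ) := hZ
    _ ≥ (s ^ 2 - 1) - (K : ℝ) * ((K : ℝ) + 3) / 2 - (s - K) * (s * t - K) := by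
        rw [hsX]
        linarith
    _ > s ^ 2 / 2 - (3 / 2 + t) * s - 1 - 3 * t / 2 := hkey
    _ = X / 2 - (3 / 2 + t) * s - 1 - 3 * t / 2 := by rw [hsX]
end

section
/- For every real number X > 0, the number of positive integers n ≤ X with h(n) ≠ 0 is at most X/2 + (3/2 + √2)·√X + 1 + (3√2)/2. -/
/-- For every real `X > 0`, `#{1 ≤ n ≤ X : h(n) ≠ 0} ≤ X/2 + (3/2 + √2)√X + 1 + 3√2/2`. -/
theorem card_h_ne_zero_le (X : ℝ) (hX : 0 < X) :
    (((Finset.Icc 1 ⌊X⌋₊).filter (fun n => lerchh n ≠ 0)).card : ℝ)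
      ≤ X / 2 + (3 / 2 + Real.sqrt 2) * Real.sqrt X + 1 + 3 * Real.sqrt 2 / 2 := by
  set N := ⌊X⌋₊ with hNdef
  set M := Nat.sqrt (2 * N) with hMdef
  -- every n counted is x*m with x ≤ m ≤ 2x, and then m ≤ M
  have key : (Finset.Icc 1 N).filter (fun n => lerchh n ≠ 0)
      ⊆ ((Finset.Icc 1 M).sigma fun m => Finset.Icc ((m + 1) / 2) m).image
          (fun p => p.2 * p.1) := by
    intro n hn
    rw [Finset.mem_filter, Finset.mem_Icc] at hn
    obtain ⟨⟨h1, h2⟩, hh⟩ := hn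
    have hrep : ∃ x m, 1 ≤ x ∧ x ≤ m ∧ m ≤ 2 * x ∧ x * m = n := by
      unfold lerchh at hh
      rcases Nat.eq_zero_or_pos (lerchA n).card with hA | hA
      · rcases Nat.eq_zero_or_pos (lerchB n).card with hB | hB
        · have hC : 0 < (lerchC n).card := by omega
          obtain ⟨x, hx⟩ := Finset.card_pos.mp hC
          rw [lerchC, Finset.mem_filter] at hx
          obtain ⟨-, hx0, hxn⟩ := hx
          exact ⟨x, 2 * x, hx0, by omega, by omega, by rw [hxn]; ring⟩
        · obtain ⟨x, hx⟩ := Finset.card_pos.mp hB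
          rw [lerchB, Finset.mem_filter] at hx
          obtain ⟨-, hx0, hxn⟩ := hx
          exact ⟨x, x, hx0, le_refl x, by omega, by rw [hxn]; ring⟩
      · obtain ⟨p, hp⟩ := Finset.card_pos.mp hA
        rw [lerchA, Finset.mem_filter] at hp
        obtain ⟨-, hp1, hp2, hp3, hp4⟩ := hp
        exact ⟨p.1, p.1 + p.2, hp1, by omega, by omega, hp4.symm⟩
    obtain ⟨x, m, hx1, hxm, hm2x, hmul⟩ := hrep
    rw [Finset.mem_image]
    refine ⟨⟨m, x⟩, ?_, hmul⟩
    simp only [Finset.mem_sigma, Finset.mem_Icc]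
    have hmM : m ≤ M := by
      rw [hMdef, Nat.le_sqrt]
      calc m * m ≤ (2 * x) * m := Nat.mul_le_mul_right _ hm2x
        _ = 2 * (x * m) := by ring
        _ ≤ 2 * N := by omega
    exact ⟨⟨by omega, hmM⟩, by omega, hxm⟩
  have hcard : ((Finset.Icc 1 N).filter (fun n => lerchh n ≠ 0)).card
      ≤ ∑ m ∈ Finset.Icc 1 M, (m + 1 - (m + 1) / 2) := by
    calc ((Finset.Icc 1 N).filter (fun n => lerchh n ≠ 0)).card
        ≤ (((Finset.Icc 1 M).sigma fun m => Finset.Icc ((m + 1) / 2) m).image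
            (fun p => p.2 * p.1)).card := Finset.card_le_card key
      _ ≤ ((Finset.Icc 1 M).sigma fun m => Finset.Icc ((m + 1) / 2) m).card :=
          Finset.card_image_le
      _ = ∑ m ∈ Finset.Icc 1 M, (m + 1 - (m + 1) / 2) := by
          rw [Finset.card_sigma]
          exact Finset.sum_congr rfl fun m _ => by rw [Nat.card_Icc]
  -- bound the sum by M²/4 + 5M/4 in ℝ
  have hsum : ((∑ m ∈ Finset.Icc 1 M, (m + 1 - (m + 1) / 2) : ℕ) : ℝ)
      ≤ (M : ℝ) * (M : ℝ) / 4 + 5 * (M : ℝ) / 4 := by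
    push_cast
    have h1 : ∀ m ∈ Finset.Icc 1 M, ((m + 1 - (m + 1) / 2 : ℕ) : ℝ) ≤ (m : ℝ) / 2 + 1 := by
      intro m _
      have h2 : 2 * (m + 1 - (m + 1) / 2) ≤ m + 2 := by omega
      have h3 : (2 : ℝ) * ((m + 1 - (m + 1) / 2 : ℕ) : ℝ) ≤ (m : ℝ) + 2 := by
        exact_mod_cast h2
      linarith
    calc (∑ m ∈ Finset.Icc 1 M, ((m + 1 - (m + 1) / 2 : ℕ) : ℝ))
        ≤ ∑ m ∈ Finset.Icc 1 M, ((m : ℝ) / 2 + 1) := Finset.sum_le_sum h1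
      _ = (∑ m ∈ Finset.Icc 1 M, (m : ℝ)) / 2 + (M : ℝ) := by
          rw [Finset.sum_add_distrib, ← Finset.sum_div, Finset.sum_const, Nat.card_Icc]
          simp
      _ ≤ (M : ℝ) * (M : ℝ) / 4 + 5 * (M : ℝ) / 4 := by
          have hg : (∑ m ∈ Finset.Icc 1 M, m) * 2 = (M + 1) * M := by
            have hins : Finset.range (M + 1) = insert 0 (Finset.Icc 1 M) := by
              ext a
              simp only [Finset.mem_range, Finset.mem_insert, Finset.mem_Icc, Nat.lt_succ_iff]
              omega
            have h0 : (0 : ℕ) ∉ Finset.Icc 1 M := by simp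
            have := Finset.sum_range_id_mul_two (M + 1)
            rw [hins, Finset.sum_insert h0] at this
            simpa using this
          have hg' := congrArg (fun k : ℕ => (k : ℝ)) hg
          push_cast at hg'
          nlinarith [hg']
  -- relate M to √X
  have hNX : (N : ℝ) ≤ X := Nat.floor_le hX.le
  have hM2 : (M : ℝ) * (M : ℝ) ≤ 2 * X := by
    have h1 : M * M ≤ 2 * N := Nat.sqrt_le (2 * N)
    have h2 : ((M * M : ℕ) : ℝ) ≤ ((2 * N : ℕ) : ℝ) := Nat.cast_le.mpr h1
    push_cast at h2
    linarith
  have hsX : (0 : ℝ) ≤ Real.sqrt X := Real.sqrt_nonneg X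
  have hs2 : (0 : ℝ) ≤ Real.sqrt 2 := Real.sqrt_nonneg 2
  have hs2sq : Real.sqrt 2 * Real.sqrt 2 = 2 := Real.mul_self_sqrt (by norm_num)
  have hsXsq : Real.sqrt X * Real.sqrt X = X := Real.mul_self_sqrt hX.le
  have hs2le : Real.sqrt 2 ≤ 2 := by nlinarith
  have hMle : (M : ℝ) ≤ Real.sqrt 2 * Real.sqrt X := by
    have h1 : ((M : ℝ)) ^ 2 ≤ 2 * X := by nlinarith
    have h2 := Real.sqrt_le_sqrt h1
    rw [Real.sqrt_sq (by positivity)] at h2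
    rw [show (2 : ℝ) * X = 2 * X from rfl, Real.sqrt_mul (by norm_num) X] at h2
    exact h2
  have hfinal := le_trans ((Nat.cast_le (α := ℝ)).mpr hcard) hsum
  have hM0 : (0 : ℝ) ≤ (M : ℝ) := Nat.cast_nonneg M
  nlinarith [hfinal, hM2, hMle, mul_nonneg hs2 hsX, hsX, hs2le, hM0]
end

section
/- If p is an odd prime and d is an odd positive integer, then h(p^d) = 0. -/
/-- If `p` is an odd prime and `d` is an odd positive integer, then `h(p^d) = 0`. -/
theorem h_odd_prime_odd_power (p d : ℕ) (hp : p.Prime) (hodd : Odd p)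
    (hd : 0 < d) (hdodd : Odd d) : lerchh (p ^ d) = 0 := by
  obtain ⟨k, hk⟩ := hodd
  have hp3 : 3 ≤ p := by
    have := hp.two_le
    rcases Nat.lt_or_ge p 3 with h | h
    · omega
    · exact h
  have hA : lerchA (p ^ d) = ∅ := by
    ext ⟨x, y⟩
    simp only [lerchA, Finset.mem_filter, Finset.mem_product, Finset.mem_range,
      Finset.notMem_empty, iff_false]
    rintro ⟨-, hx, hy1, hy2, heq⟩
    obtain ⟨i, hi, rfl⟩ := (Nat.dvd_prime_pow hp).mp ⟨x + y, heq⟩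
    have hdvd : (p ^ i + y) ∣ p ^ d := ⟨p ^ i, by rw [heq]; ring⟩
    obtain ⟨j, hj, hxy⟩ := (Nat.dvd_prime_pow hp).mp hdvd
    have hpi : 0 < p ^ i := hx
    have hlt : p ^ i < p ^ j := by omega
    have hij : i < j := (Nat.pow_lt_pow_iff_right hp.one_lt).mp hlt
    have h1 : p ^ (i + 1) ≤ p ^ j := Nat.pow_le_pow_right hp.pos hij
    have h2 : 3 * p ^ i ≤ p ^ (i + 1) := by
      rw [pow_succ]
      calc 3 * p ^ i = p ^ i * 3 := by ring
        _ ≤ p ^ i * p := Nat.mul_le_mul_left _ hp3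
    omega
  have hB : lerchB (p ^ d) = ∅ := by
    ext x
    simp only [lerchB, Finset.mem_filter, Finset.mem_range,
      Finset.notMem_empty, iff_false]
    rintro ⟨-, hx, heq⟩
    have hfac := congrArg (fun n => n.factorization p) heq
    simp only [Nat.factorization_pow, Finsupp.smul_apply, smul_eq_mul,
      hp.factorization_self] at hfac
    obtain ⟨m, hm⟩ := hdodd
    omega
  have hC : lerchC (p ^ d) = ∅ := by
    ext x
    simp only [lerchC, Finset.mem_filter, Finset.mem_range,
      Finset.notMem_empty, iff_false]
    rintro ⟨-, hx, heq⟩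
    have h2d : (2 : ℕ) ∣ p ^ d := ⟨x ^ 2, heq⟩
    have h2p : (2 : ℕ) ∣ p := Nat.Prime.dvd_of_dvd_pow Nat.prime_two h2d
    have := (Nat.prime_dvd_prime_iff_eq Nat.prime_two hp).mp h2p
    omega
  simp [lerchh, hA, hB, hC]
end

section
/- Let k ≥ 2 and let p₁, p₂, …, p_k be distinct odd primes satisfying p_k > 2·p₁·p₂⋯p_{k−1}. Then h(p₁·p₂⋯p_k) = 0. -/
/-- If `p 0, …, p (k-1)` (with `k ≥ 2`) are distinct odd primes with
`p (k-1) > 2 · p 0 · p 1 ⋯ p (k-2)`, then `h(p 0 · p 1 ⋯ p (k-1)) = 0`. -/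
theorem h_product_distinct_odd_primes (k : ℕ) (hk : 2 ≤ k) (p : ℕ → ℕ)
    (hprime : ∀ i < k, (p i).Prime) (hodd : ∀ i < k, Odd (p i))
    (hdist : ∀ i < k, ∀ j < k, i ≠ j → p i ≠ p j)
    (hbig : p (k - 1) > 2 * ∏ i ∈ Finset.range (k - 1), p i) :
    lerchh (∏ i ∈ Finset.range k, p i) = 0 := by
  set P := ∏ i ∈ Finset.range (k - 1), p i with hP
  set q := p (k - 1) with hq
  have hk1 : k - 1 + 1 = k := by omega
  have hn : ∏ i ∈ Finset.range k, p i = P * q := by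
    rw [← hk1, Finset.prod_range_succ]
  have hqprime : q.Prime := hprime (k - 1) (by omega)
  have hqpos : 0 < q := hqprime.pos
  have hPpos : 0 < P := Finset.prod_pos (fun i hi =>
    (hprime i (by have := Finset.mem_range.mp hi; omega)).pos)
  have hqP : ¬ q ∣ P := by
    intro h
    obtain ⟨i, hi, hdvd⟩ := hqprime.prime.exists_mem_finset_dvd h
    have hik : i < k - 1 := Finset.mem_range.mp hi
    have heq : q = p i := (Nat.prime_dvd_prime_iff_eq hqprime (hprime i (by omega))).mp hdvd
    have hle : p i ≤ P := Nat.le_of_dvd hPpos (Finset.dvd_prod_of_mem _ hi)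
    omega
  have hnodd : ¬ 2 ∣ P * q := by
    rw [← hn]
    intro h
    obtain ⟨i, hi, h2⟩ := Nat.prime_two.prime.exists_mem_finset_dvd h
    have := Nat.odd_iff.mp (hodd i (Finset.mem_range.mp hi))
    omega
  rw [hn]
  have hA : lerchA (P * q) = ∅ := by
    rw [Finset.eq_empty_iff_forall_notMem]
    rintro ⟨x, y⟩ hmem
    simp only [lerchA, Finset.mem_filter] at hmem
    obtain ⟨-, hx, hy1, hy2, heq⟩ := hmem
    have hx2 : 2 ≤ x := by omega
    have hlt1 : x * x < P * q := by nlinarith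
    have hyx : y + 1 ≤ x := by omega
    have hlt2 : P * q < 2 * (x * x) := by nlinarith
    have hdvd : x ∣ P * q := ⟨x + y, heq⟩
    by_cases hqx : q ∣ x
    · have hle : q ≤ x := Nat.le_of_dvd (by omega) hqx
      nlinarith
    · have hco : Nat.Coprime q x := (Nat.Prime.coprime_iff_not_dvd hqprime).mpr hqx
      have hxP : x ∣ P := (Nat.Coprime.symm hco).dvd_of_dvd_mul_right hdvd
      have hle : x ≤ P := Nat.le_of_dvd hPpos hxP
      nlinarith
  have hB : lerchB (P * q) = ∅ := by
    rw [Finset.eq_empty_iff_forall_notMem]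
    intro x hmem
    simp only [lerchB, Finset.mem_filter] at hmem
    obtain ⟨-, hx, heq⟩ := hmem
    have hqx : q ∣ x := by
      have : q ∣ x ^ 2 := heq ▸ Dvd.intro_left P rfl
      exact hqprime.dvd_of_dvd_pow this
    obtain ⟨m, hm⟩ := hqx
    apply hqP
    have : P * q = (q * m ^ 2) * q := by rw [heq, hm]; ring
    have hPq : P = q * m ^ 2 := Nat.eq_of_mul_eq_mul_right hqpos this
    exact ⟨m ^ 2, hPq⟩
  have hC : lerchC (P * q) = ∅ := by
    rw [Finset.eq_empty_iff_forall_notMem]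
    intro x hmem
    simp only [lerchC, Finset.mem_filter] at hmem
    obtain ⟨-, hx, heq⟩ := hmem
    exact hnodd ⟨x ^ 2, heq⟩
  rw [lerchh, hA, hB, hC]
  simp
end

section
/- For every real number X > 0, the number of positive integers n ≤ X with h(n) = 1 is strictly less than (1 + 1/√2)·√X. -/
lemma exists_of_lerchh (n : ℕ) (h : lerchh n = 1) :
    ∃ x, 0 < x ∧ (n = x ^ 2 ∨ n = 2 * x ^ 2) := by
  unfold lerchh at h
  have hb : 0 < (lerchB n).card ∨ 0 < (lerchC n).card := by omega
  rcases hb with hb | hb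
  · obtain ⟨x, hx⟩ := Finset.card_pos.mp hb
    simp only [lerchB, Finset.mem_filter] at hx
    exact ⟨x, hx.2.1, Or.inl hx.2.2⟩
  · obtain ⟨x, hx⟩ := Finset.card_pos.mp hb
    simp only [lerchC, Finset.mem_filter] at hx
    exact ⟨x, hx.2.1, Or.inr hx.2.2⟩

/-- For every real `X > 0`, `#{1 ≤ n ≤ X : h(n) = 1} < (1 + 1/√2)·√X`. -/
theorem card_h_eq_one_lt (X : ℝ) (hX : 0 < X) :
    (((Finset.Icc 1 ⌊X⌋₊).filter (fun n => lerchh n = 1)).card : ℝ)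
      < (1 + 1 / Real.sqrt 2) * Real.sqrt X := by
  set m := ⌊X⌋₊ with hm
  set a := Nat.sqrt m with ha
  set b := Nat.sqrt (m / 2) with hb
  -- combinatorial bound: card ≤ a + b
  have hsub : (Finset.Icc 1 m).filter (fun n => lerchh n = 1) ⊆
      (Finset.Icc 1 a).image (fun k => k ^ 2) ∪
      (Finset.Icc 1 b).image (fun k => 2 * k ^ 2) := by
    intro n hn
    simp only [Finset.mem_filter, Finset.mem_Icc] at hn
    obtain ⟨⟨hn1, hnm⟩, hh⟩ := hn
    obtain ⟨x, hx, hcase⟩ := exists_of_lerchh n hh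
    rcases hcase with rfl | rfl
    · refine Finset.mem_union_left _ (Finset.mem_image.mpr ⟨x, ?_, rfl⟩)
      simp only [Finset.mem_Icc]
      exact ⟨hx, Nat.le_sqrt.mpr (by nlinarith)⟩
    · refine Finset.mem_union_right _ (Finset.mem_image.mpr ⟨x, ?_, rfl⟩)
      simp only [Finset.mem_Icc]
      refine ⟨hx, Nat.le_sqrt.mpr ((Nat.le_div_iff_mul_le (by norm_num)).mpr (by nlinarith))⟩
  have hcard : ((Finset.Icc 1 m).filter (fun n => lerchh n = 1)).card ≤ a + b := by
    calc ((Finset.Icc 1 m).filter (fun n => lerchh n = 1)).card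
        ≤ _ := Finset.card_le_card hsub
      _ ≤ ((Finset.Icc 1 a).image (fun k => k ^ 2)).card +
          ((Finset.Icc 1 b).image (fun k => 2 * k ^ 2)).card := Finset.card_union_le _ _
      _ ≤ (Finset.Icc 1 a).card + (Finset.Icc 1 b).card :=
          Nat.add_le_add (Finset.card_image_le) (Finset.card_image_le)
      _ = a + b := by simp [Nat.card_Icc]
  -- real bounds
  have hmX : (m : ℝ) ≤ X := Nat.floor_le hX.le
  have ha2 : (a : ℝ) ^ 2 ≤ X := by
    have h1 : a ^ 2 ≤ m := Nat.sqrt_le' m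
    have : ((a ^ 2 : ℕ) : ℝ) ≤ (m : ℝ) := Nat.cast_le.mpr h1
    push_cast at this
    nlinarith
  have hb2 : 2 * (b : ℝ) ^ 2 ≤ X := by
    have h1 : b ^ 2 ≤ m / 2 := Nat.sqrt_le' (m / 2)
    have h2 : b ^ 2 * 2 ≤ m := (Nat.le_div_iff_mul_le (by norm_num)).mp h1
    have : ((b ^ 2 * 2 : ℕ) : ℝ) ≤ (m : ℝ) := Nat.cast_le.mpr h2
    push_cast at this
    nlinarith
  have hsX : 0 < Real.sqrt X := Real.sqrt_pos.mpr hX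
  have hs2 : (0:ℝ) < Real.sqrt 2 := Real.sqrt_pos.mpr (by norm_num)
  have haw : (a : ℝ) ≤ Real.sqrt X := by
    rw [show X = Real.sqrt X ^ 2 from (Real.sq_sqrt hX.le).symm] at ha2
    nlinarith [Real.sqrt_nonneg X, Nat.cast_nonneg (α := ℝ) a]
  have hbw : (b : ℝ) * Real.sqrt 2 ≤ Real.sqrt X := by
    have h2 : Real.sqrt 2 ^ 2 = 2 := Real.sq_sqrt (by norm_num)
    rw [show X = Real.sqrt X ^ 2 from (Real.sq_sqrt hX.le).symm] at hb2
    nlinarith [Real.sqrt_nonneg X, Nat.cast_nonneg (α := ℝ) b, mul_nonneg (Nat.cast_nonneg (α := ℝ) b) hs2.le]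
  -- target rewrite
  have htarget : (1 + 1 / Real.sqrt 2) * Real.sqrt X = Real.sqrt X + Real.sqrt X / Real.sqrt 2 := by
    field_simp
  rw [htarget]
  have hbw' : (b : ℝ) ≤ Real.sqrt X / Real.sqrt 2 := by
    rw [le_div_iff₀ hs2]; exact hbw
  have hkey : (a : ℝ) < Real.sqrt X ∨ (b : ℝ) < Real.sqrt X / Real.sqrt 2 := by
    by_contra hc
    push_neg at hc
    have hae : (a : ℝ) = Real.sqrt X := le_antisymm haw hc.1
    have hbe : (b : ℝ) = Real.sqrt X / Real.sqrt 2 := le_antisymm hbw' hc.2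
    have hbpos : (0:ℝ) < b := by rw [hbe]; positivity
    have : Real.sqrt 2 = (a : ℝ) / b := by
      rw [hae, hbe]; field_simp
    exact irrational_sqrt_two ⟨(a : ℚ) / (b : ℚ), by rw [this]; push_cast; ring⟩
  have hcast : (((Finset.Icc 1 m).filter (fun n => lerchh n = 1)).card : ℝ) ≤ (a : ℝ) + (b : ℝ) := by
    exact_mod_cast Nat.cast_le.mpr hcard
  rcases hkey with hk | hk
  · calc (((Finset.Icc 1 m).filter (fun n => lerchh n = 1)).card : ℝ)
        ≤ (a : ℝ) + b := hcast
      _ < Real.sqrt X + Real.sqrt X / Real.sqrt 2 := add_lt_add_of_lt_of_le hk hbw'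
  · calc (((Finset.Icc 1 m).filter (fun n => lerchh n = 1)).card : ℝ)
        ≤ (a : ℝ) + b := hcast
      _ < Real.sqrt X + Real.sqrt X / Real.sqrt 2 := add_lt_add_of_le_of_lt haw hk
end

section
/- There exists a constant c > 0 such that for all sufficiently large real X, the number of positive integers n ≤ X with h(n) = 1 is at least c·√X / log X. -/
lemma lerchA_sq_prime {p : ℕ} (hp : p.Prime) : lerchA (p ^ 2) = ∅ := by
  rw [Finset.eq_empty_iff_forall_notMem]
  rintro ⟨x, y⟩ hxy
  simp only [lerchA, Finset.mem_filter, Finset.mem_product, Finset.mem_range] at hxy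
  obtain ⟨-, hx, hy1, hy2, heq⟩ := hxy
  have hx2 : 2 ≤ x := by omega
  have hxlt : x < p := by nlinarith [hp.two_le]
  have hdvd : x ∣ p ^ 2 := ⟨x + y, heq⟩
  obtain ⟨q, hq, hqx⟩ := Nat.exists_prime_and_dvd (by omega : x ≠ 1)
  have : q = p := (Nat.prime_dvd_prime_iff_eq hq hp).mp (hq.dvd_of_dvd_pow (hqx.trans hdvd))
  have := Nat.le_of_dvd (by omega) hqx
  omega

lemma lerchB_sq_prime {p : ℕ} (hp : p.Prime) : lerchB (p ^ 2) = {p} := by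
  ext x
  simp only [lerchB, Finset.mem_filter, Finset.mem_range, Finset.mem_singleton]
  constructor
  · rintro ⟨-, -, h⟩
    exact (Nat.pow_left_injective (by norm_num) h).symm
  · rintro rfl
    refine ⟨?_, hp.pos, rfl⟩
    have := Nat.le_self_pow (two_ne_zero) x
    omega

lemma lerchC_sq_prime {p : ℕ} (hp : p.Prime) : lerchC (p ^ 2) = ∅ := by
  rw [Finset.eq_empty_iff_forall_notMem]
  intro x hx
  simp only [lerchC, Finset.mem_filter, Finset.mem_range] at hx
  obtain ⟨-, hx0, heq⟩ := hx
  have h2 : (2 : ℕ) ∣ p ^ 2 := ⟨x ^ 2, heq⟩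
  have hp2 : p = 2 := ((Nat.prime_dvd_prime_iff_eq Nat.prime_two hp).mp
    (Nat.Prime.dvd_of_dvd_pow Nat.prime_two h2)).symm
  subst hp2
  have hxx : x * x = 2 := by nlinarith
  rcases Nat.lt_or_ge x 2 with h | h
  · interval_cases x <;> omega
  · nlinarith

lemma lerchh_sq_prime {p : ℕ} (hp : p.Prime) : lerchh (p ^ 2) = 1 := by
  rw [lerchh, lerchA_sq_prime hp, lerchB_sq_prime hp, lerchC_sq_prime hp]
  simp

open Nat.Prime in
lemma chebyshev_pow (n : ℕ) (hn : 0 < n) :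
    4 ^ n ≤ (2 * n) ^ (Nat.primeCounting (2 * n) + 1) := by
  have h1 : 4 ^ n ≤ 2 * n * Nat.centralBinom n :=
    Nat.four_pow_le_two_mul_self_mul_centralBinom n hn
  have hcb : Nat.centralBinom n ≠ 0 := (Nat.centralBinom_pos n).ne'
  set s := (Nat.centralBinom n).factorization.support with hs
  have hsub : s ⊆ (Finset.range (2 * n + 1)).filter Nat.Prime := by
    intro p hp
    have hp' : p ∈ (Nat.centralBinom n).primeFactors := by
      rwa [← Nat.support_factorization]
    have hprime : p.Prime := Nat.prime_of_mem_primeFactors hp'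
    have hν : (Nat.centralBinom n).factorization p ≠ 0 := by
      rwa [← Finsupp.mem_support_iff]
    have hple : p ^ (Nat.centralBinom n).factorization p ≤ 2 * n := by
      rw [Nat.centralBinom]
      exact Nat.pow_factorization_choose_le (by omega)
    have : p ≤ p ^ (Nat.centralBinom n).factorization p :=
      Nat.le_self_pow hν p
    simp only [Finset.mem_filter, Finset.mem_range]
    exact ⟨by omega, hprime⟩
  have hcard : s.card ≤ Nat.primeCounting (2 * n) := by
    rw [Nat.primeCounting, Nat.primeCounting', Nat.count_eq_card_filter_range]
    exact Finset.card_le_card hsub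
  have h2 : Nat.centralBinom n ≤ (2 * n) ^ s.card := by
    calc Nat.centralBinom n = ∏ p ∈ s, p ^ (Nat.centralBinom n).factorization p := by
          rw [hs]; exact (Nat.factorization_prod_pow_eq_self hcb).symm
      _ ≤ ∏ p ∈ s, (2 * n) := by
          refine Finset.prod_le_prod' fun p hp => ?_
          rw [Nat.centralBinom]
          exact Nat.pow_factorization_choose_le (by omega)
      _ = (2 * n) ^ s.card := Finset.prod_const _
  calc 4 ^ n ≤ 2 * n * Nat.centralBinom n := h1
    _ ≤ 2 * n * (2 * n) ^ s.card := Nat.mul_le_mul_left _ h2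
    _ = (2 * n) ^ (s.card + 1) := by ring
    _ ≤ (2 * n) ^ (Nat.primeCounting (2 * n) + 1) :=
        Nat.pow_le_pow_right (by omega) (by omega)

/-- There is `c > 0` so that for all sufficiently large `X`,
`#{1 ≤ n ≤ X : h(n) = 1} ≥ c·√X/log X`. -/
theorem card_h_eq_one_ge :
    ∃ c : ℝ, 0 < c ∧ ∃ X₀ : ℝ, ∀ X : ℝ, X₀ ≤ X →
      (((Finset.Icc 1 ⌊X⌋₊).filter (fun n => lerchh n = 1)).card : ℝ)
        ≥ c * Real.sqrt X / Real.log X := by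
  refine ⟨Real.log 2, Real.log_pos (by norm_num), (2:ℝ)^40, fun X hX => ?_⟩
  have hX1 : (1:ℝ) < X := by nlinarith [hX]
  have hX0 : (0:ℝ) < X := by linarith
  set N := ⌊X⌋₊ with hN
  set m := Nat.sqrt N with hm
  set k := m / 2 with hk
  have hNge : (2:ℕ)^40 ≤ N := Nat.le_floor (by push_cast; linarith)
  have hmge : (2:ℕ)^20 ≤ m := by
    rw [hm, Nat.le_sqrt]
    calc (2:ℕ)^20 * 2^20 = 2^40 := by norm_num
      _ ≤ N := hNge
  have hkpos : 0 < k := by omega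
  -- real sqrt bounds
  have hsq : Real.sqrt X ≥ 0 := Real.sqrt_nonneg X
  have hmleX : (m : ℝ) ≤ Real.sqrt X := by
    rw [Real.le_sqrt (by positivity) (by positivity)]
    have h1 : (m:ℕ)^2 ≤ N := by rw [hm]; exact Nat.sqrt_le' N
    calc ((m:ℝ))^2 = ((m^2 : ℕ) : ℝ) := by push_cast; ring
      _ ≤ (N : ℝ) := by exact_mod_cast h1
      _ ≤ X := Nat.floor_le hX0.le
  have hmgeX : Real.sqrt X - 1 ≤ (m : ℝ) := by
    have h1 : N < (m + 1)^2 := by rw [hm]; exact Nat.lt_succ_sqrt' N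
    have h2 : X < ((m:ℝ) + 1)^2 := by
      calc X < (N : ℝ) + 1 := Nat.lt_floor_add_one X
        _ ≤ ((m:ℝ) + 1)^2 := by exact_mod_cast Nat.succ_le_of_lt h1
    have := Real.sqrt_le_sqrt h2.le
    rw [Real.sqrt_sq (by positivity)] at this
    linarith
  -- Chebyshev
  have h4 : 4 ^ k ≤ m ^ (Nat.primeCounting m + 1) := by
    calc 4 ^ k ≤ (2 * k) ^ (Nat.primeCounting (2 * k) + 1) := chebyshev_pow k hkpos
      _ ≤ m ^ (Nat.primeCounting (2 * k) + 1) :=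
          Nat.pow_le_pow_left (by omega) _
      _ ≤ m ^ (Nat.primeCounting m + 1) := by
          refine Nat.pow_le_pow_right (by omega) ?_
          have := Nat.monotone_primeCounting (show 2 * k ≤ m by omega)
          omega
  set P := Nat.primeCounting m with hP
  have hklog : (k:ℝ) * Real.log 4 ≤ ((P:ℝ) + 1) * Real.log m := by
    have h4R : (4:ℝ)^k ≤ (m:ℝ)^(P+1) := by exact_mod_cast h4
    have := Real.log_le_log (by positivity) h4R
    rw [Real.log_pow, Real.log_pow] at this
    push_cast at this
    linarith
  have hlogm_pos : 0 < Real.log m := Real.log_pos (by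
    have : (2:ℕ) ≤ m := le_trans (by norm_num) hmge
    exact_mod_cast this)
  have hlogm : Real.log m ≤ Real.log X / 2 := by
    rw [← Real.log_sqrt hX0.le]
    exact Real.log_le_log (by positivity) hmleX
  have hlogX : 0 < Real.log X := Real.log_pos hX1
  -- final scalar inequality: log2 * sqrt X ≥ 4 log 2 + log X
  have hfinal : Real.log 2 * Real.sqrt X ≥ 4 * Real.log 2 + Real.log X := by
    set t := Real.sqrt (Real.sqrt X) with ht
    have ht10 : (10:ℝ) ≤ t := by
      rw [ht, Real.le_sqrt (by norm_num) (by positivity), Real.le_sqrt (by positivity) hX0.le]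
      nlinarith [hX]
    have htsq : t^2 = Real.sqrt X := Real.sq_sqrt (by positivity)
    have hlogt : Real.log X = 4 * Real.log t := by
      rw [ht, Real.log_sqrt (by positivity), Real.log_sqrt hX0.le]; ring
    have hlt : Real.log t ≤ t - 1 := Real.log_le_sub_one_of_pos (by linarith)
    have hl2a : (0.6931471803 : ℝ) < Real.log 2 := Real.log_two_gt_d9
    have hl2b : Real.log 2 ≤ 1 := by linarith [Real.log_le_sub_one_of_pos (by norm_num : (0:ℝ) < 2)]
    rw [hlogt, ← htsq]
    nlinarith [ht10, hlt, hl2a, hl2b]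
  -- count of primes injects
  have hcard : (P : ℝ) ≤ (((Finset.Icc 1 N).filter (fun n => lerchh n = 1)).card : ℝ) := by
    have : P ≤ ((Finset.Icc 1 N).filter (fun n => lerchh n = 1)).card := by
      rw [hP, Nat.primeCounting, Nat.primeCounting', Nat.count_eq_card_filter_range]
      apply Finset.card_le_card_of_injOn (fun p => p ^ 2)
      · intro p hp
        simp only [Finset.mem_coe, Finset.mem_filter, Finset.mem_range] at hp
        obtain ⟨hplt, hpp⟩ := hp
        simp only [Finset.mem_coe, Finset.mem_filter, Finset.mem_Icc]
        refine ⟨⟨Nat.one_le_pow _ _ hpp.pos, ?_⟩, lerchh_sq_prime hpp⟩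
        have : p ≤ m := by omega
        rw [pow_two]
        exact Nat.le_sqrt.mp (by rw [← hm]; omega)
      · intro a _ b _ hab
        exact Nat.pow_left_injective (by norm_num) hab
    exact_mod_cast this
  rw [ge_iff_le, div_le_iff₀ hlogX]
  have hlog4 : Real.log 4 = 2 * Real.log 2 := by
    rw [show (4:ℝ) = 2^2 by norm_num, Real.log_pow]; push_cast; ring
  have hkreal : (Real.sqrt X - 2) / 2 ≤ (k : ℝ) := by
    have h1 : (m:ℝ) - 1 ≤ 2 * (k:ℝ) := by
      have : m ≤ 2 * k + 1 := by omega
      have := (Nat.cast_le (α := ℝ)).mpr this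
      push_cast at this; linarith
    linarith
  have hl2pos : 0 < Real.log 2 := Real.log_pos (by norm_num)
  have s2 : ((P:ℝ) + 1) * (2 * Real.log m) ≤ ((P:ℝ) + 1) * Real.log X := by
    apply mul_le_mul_of_nonneg_left (by linarith) (by positivity)
  have s3 : (Real.sqrt X - 2) * (2 * Real.log 2) ≤ 2 * (k:ℝ) * Real.log 4 := by
    rw [hlog4]; nlinarith [hkreal, hl2pos]
  -- combine
  have hPpos : (0:ℝ) ≤ (P:ℝ) := by positivity
  nlinarith [hcard, hklog, s2, s3, hfinal, hlogX, hPpos,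
    mul_le_mul_of_nonneg_right hcard hlogX.le]
end

section
/- For every positive integer k ≥ 1, h(2^k) = 1. -/
lemma sq_eq_two_pow {x j : ℕ} (hx : 0 < x) (h : x ^ 2 = 2 ^ j) :
    j % 2 = 0 ∧ x = 2 ^ (j / 2) := by
  have hdvd : x ∣ 2 ^ j := by rw [← h]; exact dvd_pow_self x two_ne_zero
  obtain ⟨c, hc, rfl⟩ := (Nat.dvd_prime_pow Nat.prime_two).mp hdvd
  have h2 : 2 ^ (2 * c) = 2 ^ j := by rw [← h, ← pow_mul, Nat.mul_comm]
  have hcj : 2 * c = j := Nat.pow_right_injective le_rfl h2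
  refine ⟨by omega, by congr 1; omega⟩

lemma lerchA_two_pow (k : ℕ) : lerchA (2 ^ k) = ∅ := by
  ext p
  simp only [lerchA, Finset.mem_filter, Finset.mem_product, Finset.mem_range,
    Finset.notMem_empty, iff_false, not_and]
  rintro - hp1 hy1 hy2 hn
  have hd1 : p.1 ∣ 2 ^ k := ⟨p.1 + p.2, hn⟩
  have hd2 : p.1 + p.2 ∣ 2 ^ k := ⟨p.1, by rw [hn]; ring⟩
  obtain ⟨a, ha, hpa⟩ := (Nat.dvd_prime_pow Nat.prime_two).mp hd1
  obtain ⟨b, hb, hpb⟩ := (Nat.dvd_prime_pow Nat.prime_two).mp hd2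
  have h1 : 2 ^ a < 2 ^ b := by omega
  have hab : a < b := (Nat.pow_lt_pow_iff_right (by norm_num)).mp h1
  have h2 : 2 ^ (a + 1) ≤ 2 ^ b := Nat.pow_le_pow_right (by norm_num) (by omega)
  have h3 : 2 ^ (a + 1) = 2 * 2 ^ a := by ring
  omega

/-- For every positive integer `k`, `h(2^k) = 1`. -/
theorem h_two_pow (k : ℕ) (hk : 1 ≤ k) : lerchh (2 ^ k) = 1 := by
  unfold lerchh
  rw [lerchA_two_pow]
  have hk2 : 2 ^ k = 2 * 2 ^ (k - 1) := by
    conv_lhs => rw [show k = (k - 1) + 1 by omega]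
    rw [pow_succ']
  rcases Nat.even_or_odd k with ⟨m, hm⟩ | ⟨m, hm⟩
  · -- k = m + m, even
    have hB : lerchB (2 ^ k) = {2 ^ m} := by
      ext x
      simp only [lerchB, Finset.mem_filter, Finset.mem_range, Finset.mem_singleton]
      constructor
      · rintro ⟨-, hx, hx2⟩
        obtain ⟨hj, hxe⟩ := sq_eq_two_pow hx hx2.symm
        rw [hxe]; congr 1; omega
      · rintro rfl
        refine ⟨?_, pow_pos (by norm_num) m, ?_⟩
        · have : 2 ^ m ≤ 2 ^ k := Nat.pow_le_pow_right (by norm_num) (by omega)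
          omega
        · rw [← pow_mul]; congr 1; omega
    have hC : lerchC (2 ^ k) = ∅ := by
      ext x
      simp only [lerchC, Finset.mem_filter, Finset.mem_range, Finset.notMem_empty,
        iff_false, not_and]
      rintro - hx hx2
      have hx2' : x ^ 2 = 2 ^ (k - 1) := by omega
      obtain ⟨hj, -⟩ := sq_eq_two_pow hx hx2'
      omega
    rw [hB, hC]; simp
  · -- k = 2m + 1, odd
    have hB : lerchB (2 ^ k) = ∅ := by
      ext x
      simp only [lerchB, Finset.mem_filter, Finset.mem_range, Finset.notMem_empty,
        iff_false, not_and]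
      rintro - hx hx2
      obtain ⟨hj, -⟩ := sq_eq_two_pow hx hx2.symm
      omega
    have hC : lerchC (2 ^ k) = {2 ^ m} := by
      ext x
      simp only [lerchC, Finset.mem_filter, Finset.mem_range, Finset.mem_singleton]
      constructor
      · rintro ⟨-, hx, hx2⟩
        have hx2' : x ^ 2 = 2 ^ (k - 1) := by omega
        obtain ⟨hj, hxe⟩ := sq_eq_two_pow hx hx2'
        rw [hxe]; congr 1; omega
      · rintro rfl
        refine ⟨?_, pow_pos (by norm_num) m, ?_⟩
        · have : 2 ^ m ≤ 2 ^ k := Nat.pow_le_pow_right (by norm_num) (by omega)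
          omega
        · have : (2 ^ m) ^ 2 = 2 ^ (k - 1) := by rw [← pow_mul]; congr 1; omega
          omega
    rw [hB, hC]; simp
end

section
/- If p₁ and p₂ are odd primes with p₂ > √2 · p₁, then h(p₁²·p₂²) = 1. -/
set_option maxHeartbeats 1000000


/-- If `p₁` and `p₂` are odd primes with `p₂ > √2·p₁`, then `h(p₁²·p₂²) = 1`. -/
theorem h_prod_sq_big (p₁ p₂ : ℕ) (hp₁ : p₁.Prime) (hodd₁ : Odd p₁)
    (hp₂ : p₂.Prime) (hodd₂ : Odd p₂)
    (hbig : (p₂ : ℝ) > Real.sqrt 2 * p₁) :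
    lerchh (p₁ ^ 2 * p₂ ^ 2) = 1 := by
  have hp1_3 : 3 ≤ p₁ := by
    have h2 := hp₁.two_le
    rcases Nat.lt_or_ge p₁ 3 with h3 | h3
    · interval_cases p₁
      · exact absurd hodd₁ (by decide)
    · exact h3
  have hp2_3 : 3 ≤ p₂ := by
    have h2 := hp₂.two_le
    rcases Nat.lt_or_ge p₂ 3 with h3 | h3
    · interval_cases p₂
      · exact absurd hodd₂ (by decide)
    · exact h3
  -- p₂² > 2 p₁²
  have hsq : 2 * p₁ ^ 2 < p₂ ^ 2 := by
    have h0 : (0:ℝ) ≤ Real.sqrt 2 * p₁ := by positivity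
    have h1 : (Real.sqrt 2 * p₁) ^ 2 < (p₂:ℝ) ^ 2 := by
      apply pow_lt_pow_left₀ hbig h0 (by norm_num)
    have h2 : Real.sqrt 2 ^ 2 = 2 := Real.sq_sqrt (by norm_num)
    have h3 : (2:ℝ) * (p₁:ℝ) ^ 2 < (p₂:ℝ) ^ 2 := by
      calc (2:ℝ) * (p₁:ℝ)^2 = (Real.sqrt 2 * p₁)^2 := by rw [mul_pow, h2]
        _ < _ := h1
    exact_mod_cast h3
  have h9 : 9 ≤ p₁ ^ 2 := by nlinarith
  have h9' : 9 ≤ p₂ ^ 2 := by nlinarith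
  set n := p₁ ^ 2 * p₂ ^ 2 with hn
  have hodd : Odd n := (hodd₁.pow).mul (hodd₂.pow)
  have hA : lerchA n = ∅ := by
    apply Finset.eq_empty_of_forall_notMem
    rintro ⟨x, y⟩ hmem
    simp only [lerchA, Finset.mem_filter, Finset.mem_product, Finset.mem_range] at hmem
    obtain ⟨_, hx, hy1, hy2, heq⟩ := hmem
    have hx2 : 2 ≤ x := by omega
    have hyx : y < x := by omega
    have hlt1 : x * x < n := by
      have he : n = x * x + x * y := by rw [heq]; ring
      have hxy0 : 0 < x * y := Nat.mul_pos (by omega) (by omega)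
      omega
    have hlt2 : n < 2 * (x * x) := by
      have he : n = x * x + x * y := by rw [heq]; ring
      have : x * y < x * x := mul_lt_mul_of_pos_left hyx (by omega)
      omega
    have hdvd : x ∣ p₁ ^ 2 * p₂ ^ 2 := ⟨x + y, heq⟩
    obtain ⟨d₁, d₂, hd₁, hd₂, hde⟩ := Nat.dvd_mul.mp hdvd
    obtain ⟨a, ha, rfl⟩ := (Nat.dvd_prime_pow hp₁).mp hd₁
    obtain ⟨b, hb, rfl⟩ := (Nat.dvd_prime_pow hp₂).mp hd₂
    subst hde
    interval_cases a <;> interval_cases b <;>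
      simp only [pow_zero, pow_one, one_mul, mul_one, hn] at hlt1 hlt2 <;>
      nlinarith [hsq, h9, h9', Nat.mul_le_mul h9 h9',
        Nat.mul_pos (show 0 < p₁ ^ 2 by omega) (show 0 < p₂ ^ 2 by omega)]
  have hB : lerchB n = {p₁ * p₂} := by
    ext x
    simp only [lerchB, Finset.mem_filter, Finset.mem_range, Finset.mem_singleton]
    constructor
    · rintro ⟨_, hx, heq⟩
      have : x ^ 2 = (p₁ * p₂) ^ 2 := by rw [← heq, hn]; ring
      exact Nat.pow_left_injective (by norm_num) this
    · rintro rfl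
      have hpos : 0 < p₁ * p₂ := Nat.mul_pos (by omega) (by omega)
      refine ⟨?_, hpos, by rw [hn]; ring⟩
      have h1 : p₁ * p₂ ≤ (p₁ * p₂) * (p₁ * p₂) := Nat.le_mul_of_pos_left _ hpos
      have h2 : n = (p₁ * p₂) * (p₁ * p₂) := by rw [hn]; ring
      omega
  have hC : lerchC n = ∅ := by
    apply Finset.eq_empty_of_forall_notMem
    intro x hmem
    simp only [lerchC, Finset.mem_filter, Finset.mem_range] at hmem
    obtain ⟨_, _, heq⟩ := hmem
    have : Even n := ⟨x ^ 2, by omega⟩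
    exact (Nat.not_even_iff_odd.mpr hodd) this
  rw [lerchh, hA, hB, hC]
  simp
end

section
/- For every real number X > 0, the number of positive integers n ≤ X with h(n) = 2 is strictly less than X/2 + (3/2 + √2)·√X + 1 + (3√2)/2. -/
lemma lerchB_card_le (n : ℕ) : (lerchB n).card ≤ 1 := by
  apply Finset.card_le_one.2
  intro a ha b hb
  simp only [lerchB, Finset.mem_filter] at ha hb
  nlinarith [ha.2.2, hb.2.2, ha.2.1, hb.2.1]

lemma lerchC_card_le (n : ℕ) : (lerchC n).card ≤ 1 := by
  apply Finset.card_le_one.2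
  intro a ha b hb
  simp only [lerchC, Finset.mem_filter] at ha hb
  nlinarith [ha.2.2, hb.2.2, ha.2.1, hb.2.1]

lemma sq_ne_two_sq (x y : ℕ) (hy : 0 < y) (h : x^2 = 2*y^2) : False := by
  have h2 : Real.sqrt 2 = (x:ℝ)/(y:ℝ) := by
    have hy' : (0:ℝ) < y := by exact_mod_cast hy
    rw [show (2:ℝ) = ((x:ℝ)/(y:ℝ))^2 by field_simp; exact_mod_cast h.symm]
    exact Real.sqrt_sq (by positivity)
  have : Irrational (((x:ℚ)/(y:ℚ) : ℚ) : ℝ) := by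
    rw [show (((x:ℚ)/(y:ℚ) : ℚ) : ℝ) = (x:ℝ)/(y:ℝ) by push_cast; ring, ← h2]
    exact irrational_sqrt_two
  exact Rat.not_irrational _ this

lemma lerchA_nonempty (n : ℕ) (h : lerchh n = 2) : (lerchA n).Nonempty := by
  rw [Finset.nonempty_iff_ne_empty]
  intro hA
  unfold lerchh at h
  rw [hA] at h
  simp only [Finset.card_empty, Nat.mul_zero, Nat.zero_add] at h
  have hB := lerchB_card_le n
  have hC := lerchC_card_le n
  have hB1 : (lerchB n).card = 1 := by omega
  have hC1 : (lerchC n).card = 1 := by omega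
  obtain ⟨x, hx⟩ := Finset.card_eq_one.1 hB1
  obtain ⟨y, hy⟩ := Finset.card_eq_one.1 hC1
  have hxm : x ∈ lerchB n := by rw [hx]; exact Finset.mem_singleton_self x
  have hym : y ∈ lerchC n := by rw [hy]; exact Finset.mem_singleton_self y
  simp only [lerchB, lerchC, Finset.mem_filter] at hxm hym
  exact sq_ne_two_sq x y hym.2.1 (hxm.2.2 ▸ hym.2.2)

lemma headI_mem {s : Finset (ℕ×ℕ)} (h : s.Nonempty) : s.toList.headI ∈ s := by
  rw [← Finset.mem_toList]
  have hne : s.toList ≠ [] := by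
    simp only [ne_eq, Finset.toList_eq_nil]
    exact h.ne_empty
  cases hl : s.toList with
  | nil => exact absurd hl hne
  | cons a t => simp

/-- For every real `X > 0`, `#{1 ≤ n ≤ X : h(n) = 2} < X/2 + (3/2 + √2)√X + 1 + 3√2/2`. -/
theorem card_h_eq_two_lt (X : ℝ) (hX : 0 < X) :
    (((Finset.Icc 1 ⌊X⌋₊).filter (fun n => lerchh n = 2)).card : ℝ)
      < X / 2 + (3 / 2 + Real.sqrt 2) * Real.sqrt X + 1 + 3 * Real.sqrt 2 / 2 := by
  classical
  set N := ⌊X⌋₊ with hNdef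
  set s := Nat.sqrt N with hsdef
  set k := Nat.sqrt (N / 2) with hkdef
  set D := N / (k+1) - (k+1) with hDdef
  set B₁ := (Finset.Icc 1 k).biUnion (fun a => {a} ×ˢ Finset.Icc 1 (a-1)) with hB1def
  set B₂ := (Finset.Icc (k+1) s) ×ˢ (Finset.Icc 1 D) with hB2def
  set F := (Finset.Icc 1 N).filter (fun n => lerchh n = 2) with hFdef
  -- step 1 : injection
  have hcard : F.card ≤ (B₁ ∪ B₂).card := by
    apply Finset.card_le_card_of_injOn (fun n => (lerchA n).toList.headI)
    · intro n hn
      simp only [hFdef, Finset.mem_coe, Finset.mem_filter, Finset.mem_Icc] at hn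
      have hne := lerchA_nonempty n hn.2
      have hmem := headI_mem hne
      set p := (lerchA n).toList.headI with hp
      simp only [lerchA, Finset.mem_filter] at hmem
      obtain ⟨-, hp1, hp2, hp3, hp4⟩ := hmem
      have ha2 : 2 ≤ p.1 := by omega
      have hnN : p.1 * (p.1 + p.2) ≤ N := hp4 ▸ hn.1.2
      have haq : p.1 * p.1 < N := by nlinarith
      have has : p.1 ≤ s := Nat.le_sqrt.2 (le_of_lt haq)
      rcases le_or_gt p.1 k with hak | hak
      · apply Finset.mem_union_left
        simp only [hB1def, Finset.mem_biUnion]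
        exact ⟨p.1, Finset.mem_Icc.2 ⟨by omega, hak⟩, by
          rw [Finset.mem_product]
          exact ⟨Finset.mem_singleton_self _, Finset.mem_Icc.2 ⟨hp2, hp3⟩⟩⟩
      · apply Finset.mem_union_right
        simp only [hB2def, Finset.mem_product, Finset.mem_Icc]
        refine ⟨⟨hak, has⟩, hp2, ?_⟩
        have h1 : p.1 + p.2 ≤ N / p.1 :=
          (Nat.le_div_iff_mul_le (by omega)).2 (by rw [Nat.mul_comm]; exact hnN)
        have h2 : N / p.1 ≤ N / (k+1) := Nat.div_le_div_left hak (by omega)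
        show p.2 ≤ D
        omega
    · intro a ha b hb hab
      simp only [hFdef, Finset.coe_filter, Set.mem_setOf_eq, Finset.mem_Icc] at ha hb
      simp only at hab
      have hma := headI_mem (lerchA_nonempty a ha.2)
      have hmb := headI_mem (lerchA_nonempty b hb.2)
      set pa := (lerchA a).toList.headI with hpa
      set pb := (lerchA b).toList.headI with hpb
      simp only [lerchA, Finset.mem_filter] at hma hmb
      calc a = pa.1 * (pa.1 + pa.2) := hma.2.2.2.2
        _ = pb.1 * (pb.1 + pb.2) := by rw [hab]
        _ = b := hmb.2.2.2.2.symm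
  -- step 2 : natural-number card bounds
  have hcardB1 : 2 * B₁.card ≤ k * k := by
    have h1 : B₁.card ≤ ∑ a ∈ Finset.Icc 1 k, (a - 1) := by
      calc B₁.card ≤ ∑ a ∈ Finset.Icc 1 k, (({a} ×ˢ Finset.Icc 1 (a-1)).card) :=
            Finset.card_biUnion_le
      _ = ∑ a ∈ Finset.Icc 1 k, (a - 1) := by
            apply Finset.sum_congr rfl
            intro a _
            simp [Finset.card_product]
    have h2 : ∑ a ∈ Finset.Icc 1 k, (a - 1) = ∑ i ∈ Finset.range k, i := by
      rw [show Finset.Icc 1 k = Finset.Ico 1 (k+1) by rfl, Finset.sum_Ico_eq_sum_range]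
      simp
    have h3 := Finset.sum_range_id_mul_two k
    calc 2 * B₁.card ≤ 2 * ∑ a ∈ Finset.Icc 1 k, (a - 1) := Nat.mul_le_mul_left 2 h1
      _ = (∑ i ∈ Finset.range k, i) * 2 := by rw [h2]; ring
      _ = k * (k - 1) := h3
      _ ≤ k * k := Nat.mul_le_mul_left k (Nat.sub_le k 1)
  have hcardB2 : B₂.card ≤ (s - k) * D := by
    rw [hB2def, Finset.card_product, Nat.card_Icc, Nat.card_Icc]
    exact Nat.mul_le_mul (by omega) (by omega)
  have htotal : F.card ≤ B₁.card + B₂.card :=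
    le_trans hcard (Finset.card_union_le _ _)
  -- step 3 : real estimates
  have hNX : (N:ℝ) ≤ X := Nat.floor_le hX.le
  have hXN : X < (N:ℝ) + 1 := Nat.lt_floor_add_one X
  have hk2 : (k:ℝ) * k ≤ X / 2 := by
    have h1 : k * k ≤ N / 2 := Nat.sqrt_le (N / 2)
    have h2 : ((N / 2 : ℕ) : ℝ) ≤ (N:ℝ) / 2 := by
      have := Nat.cast_div_le (α := ℝ) (m := N) (n := 2)
      simpa using this
    calc (k:ℝ) * k = ((k*k : ℕ):ℝ) := by push_cast; ring
      _ ≤ ((N/2 : ℕ):ℝ) := by exact_mod_cast h1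
      _ ≤ (N:ℝ)/2 := h2
      _ ≤ X/2 := by linarith
  have hk1 : X / 2 < ((k:ℝ) + 1)^2 := by
    have h1 : N / 2 < (k+1)^2 := Nat.lt_succ_sqrt' (N / 2)
    have h2 : N + 1 ≤ 2 * (k+1)^2 := by omega
    have h2' : (N:ℝ) + 1 ≤ 2 * ((k:ℝ)+1)^2 := by exact_mod_cast h2
    linarith
  have hkv : Real.sqrt (X/2) ≤ (k:ℝ) + 1 := by
    rw [show ((k:ℝ)+1) = Real.sqrt (((k:ℝ)+1)^2) from (Real.sqrt_sq (by positivity)).symm]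
    exact Real.sqrt_le_sqrt (le_of_lt hk1)
  have hsX : (s:ℝ) ≤ Real.sqrt X := by
    rw [show Real.sqrt X = Real.sqrt X from rfl]
    apply (Real.le_sqrt (by positivity) hX.le).2
    have h1 : s^2 ≤ N := Nat.sqrt_le' N
    calc (s:ℝ)^2 = ((s^2 : ℕ):ℝ) := by push_cast; ring
      _ ≤ (N:ℝ) := by exact_mod_cast h1
      _ ≤ X := hNX
  have hv0 : (0:ℝ) ≤ Real.sqrt (X/2) := Real.sqrt_nonneg _
  have hDb : (D:ℝ) ≤ Real.sqrt (X/2) := by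
    rcases le_or_gt (N / (k+1)) (k+1) with h | h
    · have : D = 0 := by omega
      rw [this]; exact_mod_cast hv0
    · have hD1 : (D:ℝ) = ((N/(k+1) : ℕ):ℝ) - ((k:ℝ)+1) := by
        rw [hDdef]
        push_cast [Nat.cast_sub h.le]
        ring
      have hD2 : ((N/(k+1) : ℕ):ℝ) ≤ (N:ℝ)/((k:ℝ)+1) := by
        have := Nat.cast_div_le (α := ℝ) (m := N) (n := k+1)
        push_cast at this
        exact this
      have hkpos : (0:ℝ) < (k:ℝ)+1 := by positivity
      have hvsq : Real.sqrt (X/2) ^ 2 = X/2 := Real.sq_sqrt (by positivity)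
      have key : (N:ℝ)/((k:ℝ)+1) - ((k:ℝ)+1) ≤ Real.sqrt (X/2) := by
        rw [div_sub' (ne_of_gt hkpos), div_le_iff₀ hkpos]
        nlinarith [hk1, hkv, hvsq, hNX, hv0]
      linarith
  have hsk : ((s - k : ℕ):ℝ) ≤ Real.sqrt X - Real.sqrt (X/2) + 1 := by
    have hvu : Real.sqrt (X/2) ≤ Real.sqrt X := Real.sqrt_le_sqrt (by linarith)
    rcases le_or_gt k s with h | h
    · rw [Nat.cast_sub h]
      have : (k:ℝ) + 1 ≥ Real.sqrt (X/2) := hkv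
      linarith
    · rw [Nat.sub_eq_zero_of_le h.le]
      simp only [Nat.cast_zero]
      linarith
  -- combine
  have hF1 : (F.card : ℝ) ≤ (k:ℝ)*k/2 + (Real.sqrt X - Real.sqrt (X/2) + 1) * Real.sqrt (X/2) := by
    have hc1 : (B₁.card : ℝ) ≤ (k:ℝ)*k/2 := by
      have : ((2 * B₁.card : ℕ):ℝ) ≤ ((k*k : ℕ):ℝ) := by exact_mod_cast hcardB1
      push_cast at this
      linarith
    have hc2 : (B₂.card : ℝ) ≤ (Real.sqrt X - Real.sqrt (X/2) + 1) * Real.sqrt (X/2) := by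
      have : (B₂.card : ℝ) ≤ ((s-k : ℕ):ℝ) * ((D:ℕ):ℝ) := by
        exact_mod_cast Nat.cast_le.2 hcardB2 |>.trans_eq (by push_cast; ring)
      refine this.trans (mul_le_mul hsk hDb (by positivity) ?_)
      have hvu : Real.sqrt (X/2) ≤ Real.sqrt X := Real.sqrt_le_sqrt (by linarith)
      linarith
    have : (F.card : ℝ) ≤ (B₁.card : ℝ) + (B₂.card : ℝ) := by exact_mod_cast htotal
    linarith
  -- final real inequality
  set u := Real.sqrt X with hu
  set v := Real.sqrt (X/2) with hv
  set t := Real.sqrt 2 with ht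
  have hu2 : u^2 = X := Real.sq_sqrt hX.le
  have hv2 : v^2 = X/2 := Real.sq_sqrt (by positivity)
  have ht2 : t^2 = 2 := Real.sq_sqrt (by norm_num)
  have hu0 : 0 ≤ u := Real.sqrt_nonneg _
  have hv0' : 0 ≤ v := Real.sqrt_nonneg _
  have ht0 : 0 ≤ t := Real.sqrt_nonneg _
  have hvt : v * t = u := by
    rw [hu, hv, ht, ← Real.sqrt_mul (by positivity)]
    norm_num
  have hvu : v ≤ u := Real.sqrt_le_sqrt (by linarith)
  have ht32 : t ≤ 3/2 := by
    rw [ht, show (3/2:ℝ) = Real.sqrt ((3/2)^2) from (Real.sqrt_sq (by norm_num)).symm]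
    exact Real.sqrt_le_sqrt (by norm_num)
  have huv : u * v = X / 2 * t := by
    rw [← hvt, show v*t*v = v^2*t by ring, hv2]
  have hkX : (k:ℝ)*k/2 ≤ X/4 := by linarith
  have e1 : (u - v + 1) * v = u*v - v^2 + v := by ring
  have hA : X * t ≤ X * (3/2) := mul_le_mul_of_nonneg_left ht32 hX.le
  have hB : 1 * u ≤ (3/2 + t) * u :=
    mul_le_mul_of_nonneg_right (by linarith) hu0
  calc (F.card : ℝ) ≤ (k:ℝ)*k/2 + (u - v + 1) * v := hF1
    _ < X / 2 + (3 / 2 + t) * u + 1 + 3 * t / 2 := by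
        rw [e1, huv, hv2]
        linarith [hA, hB, hkX, hvu, ht0, hu0]
end

section
/- There exists a constant c > 0 such that for all sufficiently large real X, the number of positive integers n ≤ X with h(n) = 2 is at least c·√X / log X. -/
set_option maxHeartbeats 1000000

lemma lerchA_eq {p : ℕ} (hp : p.Prime) (h3 : 3 ≤ p) : lerchA (p*(p+1)) = {(p,1)} := by
  ext ⟨x, y⟩
  simp only [lerchA, Finset.mem_filter, Finset.mem_product, Finset.mem_range,
    Finset.mem_singleton, Prod.mk.injEq]
  constructor
  · rintro ⟨⟨hx1, hy1⟩, hx0, hy0, hyx, heq⟩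
    have hxy : y < x := by omega
    have hdvd : p ∣ x * (x + y) := ⟨p+1, heq.symm⟩
    rcases (Nat.Prime.dvd_mul hp).mp hdvd with h | h
    · obtain ⟨k, rfl⟩ := h
      have hk : 0 < k := Nat.pos_of_ne_zero (by rintro rfl; simp at hx0)
      have hc : p + 1 = k * (p * k + y) := by
        have := Nat.eq_of_mul_eq_mul_left hp.pos (by linarith [heq] : p * (p+1) = p * (k * (p * k + y)))
        exact this
      have hk1 : k = 1 := by nlinarith
      subst hk1
      constructor
      · ring
      · omega
    · obtain ⟨m, hm⟩ := h
      have hm0 : 0 < m := by nlinarith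
      have hc : p + 1 = x * m := by
        have : p * (p + 1) = p * (x * m) := by rw [heq, hm]; ring
        exact Nat.eq_of_mul_eq_mul_left hp.pos this
      have hlt : p * m ≤ 2 * x - 1 := by omega
      exfalso
      rcases Nat.lt_or_ge m 2 with hm2 | hm2
      · interval_cases m <;> omega
      · nlinarith
  · rintro ⟨rfl, rfl⟩
    refine ⟨⟨by nlinarith, by nlinarith⟩, by omega, le_refl 1, by omega, rfl⟩

lemma lerchB_eq {p : ℕ} (hp : p.Prime) (h3 : 3 ≤ p) : lerchB (p*(p+1)) = ∅ := by
  rw [Finset.eq_empty_iff_forall_notMem]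
  intro x hx
  simp only [lerchB, Finset.mem_filter, Finset.mem_range] at hx
  obtain ⟨-, hx0, heq⟩ := hx
  have hdvd : p ∣ x * x := ⟨p+1, by rw [heq]; ring⟩
  obtain ⟨k, rfl⟩ := (Nat.Prime.dvd_mul hp).mp hdvd |>.elim id id
  have hc : p + 1 = p * k ^ 2 := by
    have : p * (p + 1) = p * (p * k ^ 2) := by rw [heq]; ring
    exact Nat.eq_of_mul_eq_mul_left hp.pos this
  have hk : 0 < k := Nat.pos_of_ne_zero (by rintro rfl; simp at hx0)
  rcases Nat.lt_or_ge k 2 with h | h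
  · interval_cases k <;> omega
  · nlinarith

lemma lerchC_eq {p : ℕ} (hp : p.Prime) (h3 : 3 ≤ p) : lerchC (p*(p+1)) = ∅ := by
  rw [Finset.eq_empty_iff_forall_notMem]
  intro x hx
  simp only [lerchC, Finset.mem_filter, Finset.mem_range] at hx
  obtain ⟨-, hx0, heq⟩ := hx
  have hp2 : p ≠ 2 := by omega
  have hdvd : p ∣ 2 * (x * x) := ⟨p+1, by rw [heq]; ring⟩
  have hdx : p ∣ x := by
    rcases (Nat.Prime.dvd_mul hp).mp hdvd with h | h
    · exact absurd ((Nat.prime_dvd_prime_iff_eq hp Nat.prime_two).mp h) hp2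
    · exact (Nat.Prime.dvd_mul hp).mp h |>.elim id id
  obtain ⟨k, rfl⟩ := hdx
  have hc : p + 1 = 2 * p * k ^ 2 := by
    have : p * (p + 1) = p * (2 * p * k ^ 2) := by rw [heq]; ring
    exact Nat.eq_of_mul_eq_mul_left hp.pos this
  have hk : 0 < k := Nat.pos_of_ne_zero (by rintro rfl; simp at hx0)
  nlinarith

lemma lerchh_eq {p : ℕ} (hp : p.Prime) (h3 : 3 ≤ p) : lerchh (p*(p+1)) = 2 := by
  rw [lerchh, lerchA_eq hp h3, lerchB_eq hp h3, lerchC_eq hp h3]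
  simp


lemma cheb (n : ℕ) (hn : 0 < n) :
    4 ^ n ≤ 2 * n * (2 * n) ^ (((Finset.range (2*n+1)).filter Nat.Prime).card) := by
  have h1 : Nat.centralBinom n
      = ∏ p ∈ (Finset.range (2*n+1)).filter Nat.Prime, p ^ ((Nat.centralBinom n).factorization p) := by
    conv_lhs => rw [← Nat.prod_pow_factorization_centralBinom n]
    rw [Finset.prod_filter_of_ne]
    intro p _ hne
    by_contra hnp
    rw [Nat.factorization_eq_zero_of_not_prime _ hnp, pow_zero] at hne
    exact hne rfl
  have h2 : ∏ p ∈ (Finset.range (2*n+1)).filter Nat.Prime, p ^ ((Nat.centralBinom n).factorization p)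
      ≤ (2*n) ^ (((Finset.range (2*n+1)).filter Nat.Prime).card) := by
    apply Finset.prod_le_pow_card
    intro p _
    rw [Nat.centralBinom_eq_two_mul_choose]
    exact Nat.pow_factorization_choose_le (by omega)
  calc 4 ^ n ≤ 2 * n * Nat.centralBinom n := Nat.four_pow_le_two_mul_self_mul_centralBinom n hn
    _ = 2 * n * ∏ p ∈ (Finset.range (2*n+1)).filter Nat.Prime, p ^ ((Nat.centralBinom n).factorization p) := by rw [← h1]
    _ ≤ _ := Nat.mul_le_mul_left _ h2

lemma mul_succ_inj {a b : ℕ} (hab : a * (a+1) = b * (b+1)) : a = b := by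
  rcases lt_trichotomy a b with h | h | h
  · nlinarith
  · exact h
  · nlinarith

/-- There is `c > 0` so that for all sufficiently large `X`,
`#{1 ≤ n ≤ X : h(n) = 2} ≥ c·√X/log X`. -/
theorem card_h_eq_two_ge :
    ∃ c : ℝ, 0 < c ∧ ∃ X₀ : ℝ, ∀ X : ℝ, X₀ ≤ X →
      (((Finset.Icc 1 ⌊X⌋₊).filter (fun n => lerchh n = 2)).card : ℝ)
        ≥ c * Real.sqrt X / Real.log X := by
  refine ⟨1/4, by norm_num, ?_⟩
  have hlo := (isLittleO_log_rpow_atTop (by norm_num : (0:ℝ) < 1/2)).bound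
    (by norm_num : (0:ℝ) < 1/16)
  rw [Filter.eventually_atTop] at hlo
  obtain ⟨X₁, hX₁⟩ := hlo
  refine ⟨max X₁ 64, fun X hX => ?_⟩
  have hX64 : (64:ℝ) ≤ X := le_trans (le_max_right _ _) hX
  have hX0 : (0:ℝ) ≤ X := by linarith
  have hlog16 : Real.log X ≤ (1/16) * Real.sqrt X := by
    have h := hX₁ X (le_trans (le_max_left _ _) hX)
    rw [Real.norm_eq_abs, Real.norm_eq_abs,
      abs_of_nonneg (Real.log_nonneg (by linarith)),
      abs_of_nonneg (Real.rpow_nonneg hX0 _), ← Real.sqrt_eq_rpow] at h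
    exact h
  have hlogX : 0 < Real.log X := Real.log_pos (by linarith)
  set N := ⌊X⌋₊ with hNdef
  set s := N.sqrt with hsdef
  set M := s - 1 with hMdef
  set n := M / 2 with hndef
  have hN : 64 ≤ N := Nat.le_floor (by exact_mod_cast hX64)
  have hs : 8 ≤ s := Nat.le_sqrt.mpr (by omega)
  have hM : 7 ≤ M := by omega
  have hn3 : 3 ≤ n := by omega
  have h2nM : 2 * n ≤ M := by omega
  have h2n1 : M ≤ 2*n+1 := by omega
  -- real facts about s, n
  have hsX : (s:ℝ) ≤ Real.sqrt X := by
    have h1 : ((s:ℝ))^2 ≤ (N:ℝ) := by exact_mod_cast Nat.sqrt_le' N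
    have h2 : (N:ℝ) ≤ X := Nat.floor_le hX0
    nlinarith [Real.sq_sqrt hX0, Real.sqrt_nonneg X, (Nat.cast_nonneg s : (0:ℝ) ≤ (s:ℝ))]
  have hsx2 : Real.sqrt X - 2 ≤ (s:ℝ) := by
    have h1 : (N:ℝ) < ((s:ℝ)+1)^2 := by exact_mod_cast Nat.lt_succ_sqrt' N
    have h2 : X - 1 < (N:ℝ) := by
      have := Nat.lt_floor_add_one X
      linarith
    nlinarith [Real.sq_sqrt hX0, Real.sqrt_nonneg X, (Nat.cast_nonneg s : (0:ℝ) ≤ (s:ℝ))]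
  have hsqX8 : 8 ≤ Real.sqrt X := le_trans (by exact_mod_cast hs) hsX
  have hMR : (M:ℝ) = (s:ℝ) - 1 := by
    rw [hMdef, Nat.cast_sub (by omega)]; norm_num
  have hnR : Real.sqrt X / 4 ≤ (n:ℝ) := by
    have h1 : ((M:ℝ) - 1)/2 ≤ (n:ℝ) := by
      have : (M:ℝ) ≤ 2*(n:ℝ)+1 := by exact_mod_cast h2n1
      linarith
    rw [hMR] at h1
    linarith
  have h2nR : Real.log (2*(n:ℕ)) ≤ (1/2) * Real.log X := by
    have h2nle : ((2*n:ℕ):ℝ) ≤ Real.sqrt X := by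
      have : ((2*n:ℕ):ℝ) ≤ (s:ℝ) := by exact_mod_cast le_trans h2nM (by omega : M ≤ s)
      linarith
    calc Real.log (2*(n:ℕ)) ≤ Real.log (Real.sqrt X) := by
          apply Real.log_le_log (by positivity)
          exact_mod_cast h2nle
      _ = Real.log X / 2 := Real.log_sqrt hX0
      _ = (1/2) * Real.log X := by ring
  set K := ((Finset.range (2*n+1)).filter Nat.Prime).card with hKdef
  have hch : (n:ℝ) * Real.log 4 ≤ ((K:ℝ)+1) * Real.log (2*n) := by
    have hc := cheb n (by omega)
    have hreal : (4:ℝ)^n ≤ (2*(n:ℝ))^(K+1) := by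
      calc (4:ℝ)^n ≤ ((2*n * (2*n)^K : ℕ):ℝ) := by exact_mod_cast hc
        _ = (2*(n:ℝ))^(K+1) := by push_cast; ring
    calc (n:ℝ) * Real.log 4 = Real.log ((4:ℝ)^n) := by rw [Real.log_pow]
      _ ≤ Real.log ((2*(n:ℝ))^(K+1)) := Real.log_le_log (by positivity) hreal
      _ = ((K:ℝ)+1) * Real.log (2*(n:ℝ)) := by rw [Real.log_pow]; push_cast; ring
  have hlog4 : 1 ≤ Real.log 4 := by
    have he : Real.exp 1 ≤ 4 := le_trans Real.exp_one_lt_d9.le (by norm_num)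
    calc (1:ℝ) = Real.log (Real.exp 1) := (Real.log_exp 1).symm
      _ ≤ Real.log 4 := Real.log_le_log (Real.exp_pos 1) he
  have hK : Real.sqrt X / (2 * Real.log X) ≤ (K:ℝ) + 1 := by
    have h1 : (n:ℝ) ≤ ((K:ℝ)+1) * ((1/2)*Real.log X) := by
      have hK0 : (0:ℝ) ≤ (K:ℝ)+1 := by positivity
      have hn0 : (0:ℝ) ≤ (n:ℝ) := Nat.cast_nonneg n
      have h2 : ((K:ℝ)+1) * Real.log (2*(n:ℕ)) ≤ ((K:ℝ)+1) * ((1/2)*Real.log X) :=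
        mul_le_mul_of_nonneg_left h2nR hK0
      push_cast at hch h2 ⊢
      nlinarith
    rw [div_le_iff₀ (by positivity)]
    nlinarith [hnR]
  -- injection of primes into the lerchh count
  have hcount : ((Finset.Icc 3 M).filter Nat.Prime).card
      ≤ ((Finset.Icc 1 N).filter (fun n => lerchh n = 2)).card := by
    apply Finset.card_le_card_of_injOn (fun p => p * (p+1))
    · intro p hp
      simp only [Finset.mem_coe, Finset.mem_filter, Finset.mem_Icc] at hp ⊢
      obtain ⟨⟨hp3, hpM⟩, hpp⟩ := hp
      refine ⟨⟨by nlinarith, ?_⟩, lerchh_eq hpp hp3⟩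
      have h1 : p * (p+1) ≤ M * (M+1) := Nat.mul_le_mul hpM (by omega)
      have h2 : M * (M+1) ≤ s * s := Nat.mul_le_mul (by omega) (by omega)
      have h3 : s * s ≤ N := Nat.sqrt_le N
      omega
    · intro a _ b _ hab
      exact mul_succ_inj hab
  have hK2 : K ≤ ((Finset.Icc 3 M).filter Nat.Prime).card + 1 := by
    have hsub : (Finset.range (2*n+1)).filter Nat.Prime
        ⊆ insert 2 ((Finset.Icc 3 M).filter Nat.Prime) := by
      intro p hp
      simp only [Finset.mem_filter, Finset.mem_range, Finset.mem_insert, Finset.mem_Icc] at hp ⊢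
      obtain ⟨hpr, hpp⟩ := hp
      rcases eq_or_ne p 2 with h | h
      · exact Or.inl h
      · exact Or.inr ⟨⟨by have := hpp.two_le; omega, by omega⟩, hpp⟩
    calc K ≤ (insert 2 ((Finset.Icc 3 M).filter Nat.Prime)).card := Finset.card_le_card hsub
      _ ≤ _ := Finset.card_insert_le _ _
  -- final assembly
  have hfin : Real.sqrt X / (2 * Real.log X) - 2
      ≤ (((Finset.Icc 1 N).filter (fun n => lerchh n = 2)).card : ℝ) := by
    have h1 : ((K:ℝ)) ≤ (((Finset.Icc 3 M).filter Nat.Prime).card : ℝ) + 1 := by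
      exact_mod_cast hK2
    have h2 : (((Finset.Icc 3 M).filter Nat.Prime).card : ℝ)
        ≤ (((Finset.Icc 1 N).filter (fun n => lerchh n = 2)).card : ℝ) := by
      exact_mod_cast hcount
    linarith
  rw [ge_iff_le, div_le_iff₀ hlogX]
  have hcard0 : (0:ℝ) ≤ (((Finset.Icc 1 N).filter (fun n => lerchh n = 2)).card : ℝ) :=
    Nat.cast_nonneg _
  have hexp : (Real.sqrt X / (2 * Real.log X) - 2) * Real.log X
      ≤ (((Finset.Icc 1 N).filter (fun n => lerchh n = 2)).card : ℝ) * Real.log X :=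
    mul_le_mul_of_nonneg_right hfin hlogX.le
  have hexp2 : (Real.sqrt X / (2 * Real.log X) - 2) * Real.log X
      = Real.sqrt X / 2 - 2 * Real.log X := by
    field_simp
  rw [hexp2] at hexp
  calc (1/4) * Real.sqrt X ≤ Real.sqrt X / 2 - 2 * Real.log X := by nlinarith [hlog16]
    _ ≤ _ := hexp
end

section
/- If p₁ and p₂ are odd primes with p₁ < p₂ < √2 · p₁, then h(p₁²·p₂²) = 3. -/
set_option maxHeartbeats 1600000 in
theorem lerch_aux (p₁ p₂ x : ℕ) (hp13 : 3 ≤ p₁) (hp2 : 4 ≤ p₂)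
    (hsq : p₂ ^ 2 < 2 * p₁ ^ 2) (hlt' : p₁ ^ 2 < p₂ ^ 2)
    (hp₁ : p₁.Prime) (hp₂ : p₂.Prime)
    (hxd : x ∣ p₁ ^ 2 * p₂ ^ 2)
    (hlb : x * x < p₁ ^ 2 * p₂ ^ 2)
    (hub : p₁ ^ 2 * p₂ ^ 2 < x * (2 * x)) : x = p₁ ^ 2 := by
  obtain ⟨a, b, ha, hb, rfl⟩ := exists_dvd_and_dvd_of_dvd_mul hxd
  obtain ⟨i, hi, rfl⟩ := (Nat.dvd_prime_pow hp₁).mp ha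
  obtain ⟨j, hj, rfl⟩ := (Nat.dvd_prime_pow hp₂).mp hb
  clear hxd ha hb hp₁ hp₂
  have hp1sq : 9 ≤ p₁ ^ 2 := by nlinarith
  have hp2sq : 16 ≤ p₂ ^ 2 := by nlinarith
  have hnpos : 2 ≤ p₁ ^ 2 * p₂ ^ 2 := by nlinarith
  interval_cases i <;> interval_cases j
  · nlinarith [hlb, hub]
  · nlinarith [hub, hp1sq, hp2sq, sq_nonneg p₂]
  · nlinarith [hlb, hlt', hp2sq, sq_nonneg p₂]
  · nlinarith [hub, hp1sq, hp2sq, sq_nonneg p₁]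
  · nlinarith [hlb]
  · nlinarith [hlb, hnpos, mul_le_mul_right hp2sq (p₁ ^ 2 * p₂ ^ 2)]
  · simp
  · nlinarith [hlb, hnpos, mul_le_mul_right hp1sq (p₁ ^ 2 * p₂ ^ 2)]
  · nlinarith [hlb, hnpos, mul_le_mul_right hnpos (p₁ ^ 2 * p₂ ^ 2)]

/-- If `p₁` and `p₂` are odd primes with `p₁ < p₂ < √2·p₁`, then `h(p₁²·p₂²) = 3`. -/
theorem h_prod_sq_close (p₁ p₂ : ℕ) (hp₁ : p₁.Prime) (hodd₁ : Odd p₁)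
    (hp₂ : p₂.Prime) (hodd₂ : Odd p₂) (hlt : p₁ < p₂)
    (hlt2 : (p₂ : ℝ) < Real.sqrt 2 * p₁) :
    lerchh (p₁ ^ 2 * p₂ ^ 2) = 3 := by
  have hp1ne2 : p₁ ≠ 2 := by rintro rfl; exact (by norm_num : ¬ Odd 2) hodd₁
  have hp13 : 3 ≤ p₁ := by have := hp₁.two_le; omega
  have hp2 : 4 ≤ p₂ := by omega
  have hsq : p₂ ^ 2 < 2 * p₁ ^ 2 := by
    have h1 : (0:ℝ) ≤ (p₂:ℝ) := Nat.cast_nonneg _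
    have h2 : Real.sqrt 2 ^ 2 = 2 := Real.sq_sqrt (by norm_num)
    have h0 : (p₂:ℝ)^2 < 2 * (p₁:ℝ)^2 := by nlinarith [Real.sqrt_nonneg 2]
    exact_mod_cast h0
  have hlt' : p₁ ^ 2 < p₂ ^ 2 := by nlinarith
  have hle1 : p₁ ^ 2 ≤ p₁ ^ 2 * p₂ ^ 2 := Nat.le_mul_of_pos_right _ (by positivity)
  have hle2 : p₂ ^ 2 ≤ p₁ ^ 2 * p₂ ^ 2 := Nat.le_mul_of_pos_left _ (by positivity)
  have hA : lerchA (p₁^2*p₂^2) = {(p₁^2, p₂^2 - p₁^2)} := by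
    ext ⟨x, y⟩
    simp only [lerchA, Finset.mem_filter, Finset.mem_product, Finset.mem_range,
      Finset.mem_singleton, Prod.mk.injEq]
    constructor
    · rintro ⟨⟨hx1, hy1⟩, hx0, hy0, hyx, hn⟩
      have hxd : x ∣ p₁^2 * p₂^2 := ⟨x+y, hn⟩
      have hyx' : y < x := by omega
      have hlb : x * x < p₁^2*p₂^2 := by
        rw [hn]; exact mul_lt_mul_of_pos_left (by omega) hx0
      have hub : p₁^2*p₂^2 < x * (2 * x) := by
        rw [hn]; exact mul_lt_mul_of_pos_left (by omega) hx0
      have hx : x = p₁ ^ 2 := lerch_aux p₁ p₂ x hp13 hp2 hsq hlt' hp₁ hp₂ hxd hlb hub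
      subst hx
      have hy : p₁^2 + y = p₂^2 :=
        Nat.eq_of_mul_eq_mul_left (by positivity) hn.symm
      exact ⟨rfl, by omega⟩
    · rintro ⟨rfl, rfl⟩
      have h1 : p₁^2 + (p₂^2 - p₁^2) = p₂^2 := by omega
      exact ⟨⟨by omega, by omega⟩, by positivity, by omega, by omega, by rw [h1]⟩
  have hB : lerchB (p₁^2*p₂^2) = {p₁ * p₂} := by
    have hpp : p₁ * p₂ ≤ p₁^2 * p₂^2 := by
      calc p₁ * p₂ ≤ p₁^2 * p₂ := Nat.mul_le_mul_right _ (Nat.le_self_pow two_ne_zero _)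
        _ ≤ p₁^2 * p₂^2 := Nat.mul_le_mul_left _ (Nat.le_self_pow two_ne_zero _)
    ext x
    simp only [lerchB, Finset.mem_filter, Finset.mem_range, Finset.mem_singleton]
    constructor
    · rintro ⟨hx1, hx0, hn⟩
      have h : (p₁ * p₂)^2 = x^2 := by rw [← hn]; ring
      exact (Nat.pow_left_injective (by norm_num) h).symm
    · rintro rfl
      exact ⟨by omega, by positivity, by ring⟩
  have hC : lerchC (p₁^2*p₂^2) = ∅ := by
    ext x
    simp only [lerchC, Finset.mem_filter, Finset.mem_range, Finset.notMem_empty, iff_false,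
      not_and]
    intro _ hx0 hn
    have hoddn : Odd (p₁^2 * p₂^2) := (hodd₁.pow).mul (hodd₂.pow)
    rw [hn] at hoddn
    exact (by simp : ¬ Odd (2 * x^2)) hoddn
  rw [lerchh, hA, hB, hC]
  simp
end

section
/- For every positive integer n, h(n) is odd if and only if n is a perfect square or twice a perfect square (i.e., n = x² or n = 2x² for some positive integer x). -/
lemma mem_lerchB {n x : ℕ} : x ∈ lerchB n ↔ 0 < x ∧ n = x ^ 2 := by
  simp only [lerchB, Finset.mem_filter, Finset.mem_range]
  constructor
  · rintro ⟨-, h⟩; exact h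
  · rintro ⟨hx, h⟩
    refine ⟨?_, hx, h⟩
    have : x ≤ x ^ 2 := Nat.le_self_pow two_ne_zero x
    omega

lemma mem_lerchC {n x : ℕ} : x ∈ lerchC n ↔ 0 < x ∧ n = 2 * x ^ 2 := by
  simp only [lerchC, Finset.mem_filter, Finset.mem_range]
  constructor
  · rintro ⟨-, h⟩; exact h
  · rintro ⟨hx, h⟩
    refine ⟨?_, hx, h⟩
    have : x ≤ x ^ 2 := Nat.le_self_pow two_ne_zero x
    omega

lemma cardB_le {n : ℕ} : (lerchB n).card ≤ 1 := by
  refine Finset.card_le_one.mpr ?_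
  intro a ha b hb
  rw [mem_lerchB] at ha hb
  exact Nat.pow_left_injective (by norm_num) (ha.2 ▸ hb.2)

lemma cardC_le {n : ℕ} : (lerchC n).card ≤ 1 := by
  refine Finset.card_le_one.mpr ?_
  intro a ha b hb
  rw [mem_lerchC] at ha hb
  have : a ^ 2 = b ^ 2 := by omega
  exact Nat.pow_left_injective (by norm_num) this

lemma not_both {n : ℕ} (hn : 0 < n) :
    ¬((∃ x : ℕ, 0 < x ∧ n = x ^ 2) ∧ (∃ y : ℕ, 0 < y ∧ n = 2 * y ^ 2)) := by
  rintro ⟨⟨x, hx, hx2⟩, ⟨y, hy, hy2⟩⟩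
  have hxy : x ^ 2 = 2 * y ^ 2 := by omega
  have h1 : (x ^ 2).factorization 2 = 2 * x.factorization 2 := by
    simp [Nat.factorization_pow]
  have h2 : (2 * y ^ 2).factorization 2 = 1 + 2 * y.factorization 2 := by
    rw [Nat.factorization_mul two_ne_zero (pow_ne_zero _ hy.ne'),
      Nat.factorization_pow]
    simp [Nat.Prime.factorization_self Nat.prime_two]
  rw [hxy, h2] at h1
  omega

/-- For every positive integer `n`, `h(n)` is odd iff `n` is a perfect square or
twice a perfect square. -/
theorem h_odd_iff (n : ℕ) (hn : 0 < n) :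
    Odd (lerchh n) ↔
      (∃ x : ℕ, 0 < x ∧ n = x ^ 2) ∨ (∃ x : ℕ, 0 < x ∧ n = 2 * x ^ 2) := by
  have hB : (0 < (lerchB n).card) ↔ (∃ x : ℕ, 0 < x ∧ n = x ^ 2) := by
    rw [Finset.card_pos, Finset.Nonempty]
    simp only [mem_lerchB]
  have hC : (0 < (lerchC n).card) ↔ (∃ x : ℕ, 0 < x ∧ n = 2 * x ^ 2) := by
    rw [Finset.card_pos, Finset.Nonempty]
    simp only [mem_lerchC]
  have hnb := not_both hn
  rw [← hB, ← hC] at hnb ⊢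
  have hb := cardB_le (n := n)
  have hc := cardC_le (n := n)
  rw [lerchh, Nat.odd_iff]
  omega
end

section
/- The set of positive integers n for which h(n) is even has natural density 1; that is, (1/X)·#{1 ≤ n ≤ X : h(n) ≡ 0 (mod 2)} tends to 1 as X tends to infinity. -/
attribute [local instance] Classical.propDecidable


lemma lerch_odd_imp {n : ℕ} (hn : ¬ lerchh n % 2 = 0) :
    (∃ x, n = x ^ 2) ∨ (∃ x, n = 2 * x ^ 2) := by
  unfold lerchh at hn
  have h : ((lerchB n).card + (lerchC n).card) % 2 ≠ 0 := by
    omega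
  by_contra hc
  push_neg at hc
  have hB : (lerchB n).card = 0 := by
    rw [Finset.card_eq_zero, Finset.eq_empty_iff_forall_notMem]
    intro x hx
    simp only [lerchB, Finset.mem_filter] at hx
    exact hc.1 x hx.2.2
  have hC : (lerchC n).card = 0 := by
    rw [Finset.card_eq_zero, Finset.eq_empty_iff_forall_notMem]
    intro x hx
    simp only [lerchC, Finset.mem_filter] at hx
    exact hc.2 x hx.2.2
  omega

lemma card_sq_filter (N : ℕ) :
    ((Finset.Icc 1 N).filter (fun n => ∃ x, n = x ^ 2)).card ≤ Nat.sqrt N := by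
  have : ((Finset.Icc 1 N).filter (fun n => ∃ x, n = x ^ 2)).card ≤
      (Finset.Icc 1 (Nat.sqrt N)).card := by
    apply Finset.card_le_card_of_injOn Nat.sqrt
    · intro n hn
      simp only [Finset.mem_coe, Finset.mem_filter, Finset.mem_Icc] at hn ⊢
      obtain ⟨⟨h1, h2⟩, x, hx⟩ := hn
      have hx1 : 1 ≤ x := by
        rcases Nat.eq_zero_or_pos x with h | h
        · simp [h] at hx; omega
        · exact h
      have hs : Nat.sqrt n = x := by rw [hx, Nat.sqrt_eq']
      constructor
      · omega
      · rw [hs, Nat.le_sqrt]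
        calc x * x = x ^ 2 := (sq x).symm
        _ = n := hx.symm
        _ ≤ N := h2
    · intro n1 h1 n2 h2 heq
      simp only [Finset.coe_filter, Set.mem_setOf_eq, Finset.mem_Icc] at h1 h2
      obtain ⟨_, x1, hx1⟩ := h1
      obtain ⟨_, x2, hx2⟩ := h2
      have e1 : Nat.sqrt n1 = x1 := by rw [hx1, Nat.sqrt_eq']
      have e2 : Nat.sqrt n2 = x2 := by rw [hx2, Nat.sqrt_eq']
      rw [hx1, hx2, ← e1, ← e2, heq]
  simpa [Nat.card_Icc] using this

lemma card_2sq_filter (N : ℕ) :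
    ((Finset.Icc 1 N).filter (fun n => ∃ x, n = 2 * x ^ 2)).card ≤ Nat.sqrt N := by
  have : ((Finset.Icc 1 N).filter (fun n => ∃ x, n = 2 * x ^ 2)).card ≤
      (Finset.Icc 1 (Nat.sqrt N)).card := by
    apply Finset.card_le_card_of_injOn (fun n => Nat.sqrt (n / 2))
    · intro n hn
      simp only [Finset.mem_coe, Finset.mem_filter, Finset.mem_Icc] at hn ⊢
      obtain ⟨⟨h1, h2⟩, x, hx⟩ := hn
      have hx1 : 1 ≤ x := by
        rcases Nat.eq_zero_or_pos x with h | h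
        · simp [h] at hx; omega
        · exact h
      have hd : n / 2 = x ^ 2 := by omega
      have hs : Nat.sqrt (n / 2) = x := by rw [hd, Nat.sqrt_eq']
      constructor
      · omega
      · rw [hs, Nat.le_sqrt]
        nlinarith
    · intro n1 h1 n2 h2 heq
      simp only [Finset.coe_filter, Set.mem_setOf_eq, Finset.mem_Icc] at h1 h2
      obtain ⟨_, x1, hx1⟩ := h1
      obtain ⟨_, x2, hx2⟩ := h2
      have d1 : n1 / 2 = x1 ^ 2 := by omega
      have d2 : n2 / 2 = x2 ^ 2 := by omega
      have e1 : Nat.sqrt (n1 / 2) = x1 := by rw [d1, Nat.sqrt_eq']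
      have e2 : Nat.sqrt (n2 / 2) = x2 := by rw [d2, Nat.sqrt_eq']
      simp only at heq
      rw [hx1, hx2, ← e1, ← e2, heq]
  simpa [Nat.card_Icc] using this

lemma lerch_even_count (N : ℕ) :
    N ≤ ((Finset.Icc 1 N).filter (fun n => lerchh n % 2 = 0)).card + 2 * Nat.sqrt N := by
  have hsplit : ((Finset.Icc 1 N).filter (fun n => lerchh n % 2 = 0)).card +
      ((Finset.Icc 1 N).filter (fun n => ¬ lerchh n % 2 = 0)).card = N := by
    rw [Finset.card_filter_add_card_filter_not, Nat.card_Icc]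
    omega
  have hsub : (Finset.Icc 1 N).filter (fun n => ¬ lerchh n % 2 = 0) ⊆
      ((Finset.Icc 1 N).filter (fun n => ∃ x, n = x ^ 2)) ∪
      ((Finset.Icc 1 N).filter (fun n => ∃ x, n = 2 * x ^ 2)) := by
    intro n hn
    simp only [Finset.mem_filter, Finset.mem_union] at hn ⊢
    rcases lerch_odd_imp hn.2 with h | h
    · exact Or.inl ⟨hn.1, h⟩
    · exact Or.inr ⟨hn.1, h⟩
  have hodd : ((Finset.Icc 1 N).filter (fun n => ¬ lerchh n % 2 = 0)).card ≤ 2 * Nat.sqrt N := by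
    calc ((Finset.Icc 1 N).filter (fun n => ¬ lerchh n % 2 = 0)).card
        ≤ (((Finset.Icc 1 N).filter (fun n => ∃ x, n = x ^ 2)) ∪
          ((Finset.Icc 1 N).filter (fun n => ∃ x, n = 2 * x ^ 2))).card :=
          Finset.card_le_card hsub
      _ ≤ ((Finset.Icc 1 N).filter (fun n => ∃ x, n = x ^ 2)).card +
          ((Finset.Icc 1 N).filter (fun n => ∃ x, n = 2 * x ^ 2)).card :=
          Finset.card_union_le _ _
      _ ≤ 2 * Nat.sqrt N := by
          have := card_sq_filter N
          have := card_2sq_filter N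
          omega
  omega

open Filter in
/-- The set of `n` with `h(n)` even has natural density `1`:
`#{1 ≤ n ≤ X : h(n) ≡ 0 (mod 2)}/X → 1` as `X → ∞`. -/
theorem h_even_density_one :
    Tendsto
      (fun X : ℝ =>
        (((Finset.Icc 1 ⌊X⌋₊).filter (fun n => lerchh n % 2 = 0)).card : ℝ) / X)
      atTop (nhds 1) := by
  have hupper : Tendsto (fun X : ℝ => (⌊X⌋₊ : ℝ) / X) atTop (nhds 1) :=
    tendsto_nat_floor_div_atTop
  have hsqrt : Tendsto (fun X : ℝ => (⌊X⌋₊ : ℝ) / X - 2 * Real.sqrt X / X) atTop (nhds 1) := by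
    have h0 : Tendsto (fun X : ℝ => 2 * Real.sqrt X / X) atTop (nhds 0) := by
      have : Tendsto (fun X : ℝ => X ^ (-(1/2 : ℝ))) atTop (nhds 0) :=
        tendsto_rpow_neg_atTop (by norm_num)
      have h2 : Tendsto (fun X : ℝ => 2 * X ^ (-(1/2 : ℝ))) atTop (nhds 0) := by
        simpa using this.const_mul 2
      apply h2.congr'
      filter_upwards [eventually_gt_atTop 0] with X hX
      have he : X ^ (-(1/2):ℝ) = Real.sqrt X / X := by
        rw [Real.sqrt_eq_rpow, show (-(1/2):ℝ) = 1/2 - 1 by norm_num, Real.rpow_sub hX,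
          Real.rpow_one]
      rw [mul_div_assoc, ← he]
    simpa using hupper.sub h0
  apply tendsto_of_tendsto_of_tendsto_of_le_of_le' hsqrt hupper
  · filter_upwards [eventually_ge_atTop (0:ℝ)] with X hX
    have key := lerch_even_count ⌊X⌋₊
    have hr : (⌊X⌋₊ : ℝ) ≤
        (((Finset.Icc 1 ⌊X⌋₊).filter (fun n => lerchh n % 2 = 0)).card : ℝ) +
        2 * (Nat.sqrt ⌊X⌋₊ : ℝ) := by exact_mod_cast key
    have hs : (Nat.sqrt ⌊X⌋₊ : ℝ) ≤ Real.sqrt X := by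
      rw [show (Nat.sqrt ⌊X⌋₊ : ℝ) = Real.sqrt ((Nat.sqrt ⌊X⌋₊ : ℝ) ^ 2) by
        rw [Real.sqrt_sq (by positivity)]]
      apply Real.sqrt_le_sqrt
      have : (Nat.sqrt ⌊X⌋₊) ^ 2 ≤ ⌊X⌋₊ := Nat.sqrt_le' ⌊X⌋₊
      calc ((Nat.sqrt ⌊X⌋₊ : ℝ)) ^ 2 = ((Nat.sqrt ⌊X⌋₊ ^ 2 : ℕ) : ℝ) := by push_cast; ring
        _ ≤ (⌊X⌋₊ : ℝ) := by exact_mod_cast this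
        _ ≤ X := Nat.floor_le hX
    rcases eq_or_lt_of_le hX with h | h
    · simp [← h]
    · rw [sub_le_iff_le_add, ← add_div, div_le_div_iff_of_pos_right h]
      linarith
  · filter_upwards [eventually_ge_atTop (0:ℝ)] with X hX
    have hcard : (((Finset.Icc 1 ⌊X⌋₊).filter (fun n => lerchh n % 2 = 0)).card : ℝ) ≤
        (⌊X⌋₊ : ℝ) := by
      have : ((Finset.Icc 1 ⌊X⌋₊).filter (fun n => lerchh n % 2 = 0)).card ≤ ⌊X⌋₊ := by
        calc _ ≤ (Finset.Icc 1 ⌊X⌋₊).card := Finset.card_filter_le _ _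
          _ = ⌊X⌋₊ := by rw [Nat.card_Icc]; omega
      exact_mod_cast this
    rcases eq_or_lt_of_le hX with h | h
    · simp [← h]
    · exact div_le_div_of_nonneg_right hcard h.le |>.trans_eq rfl
end
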